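/- arXiv:2102.09726 — 8 statements merged into one kernel-verified Lean document; each statement's English description precedes it below -/
import Mathlib

section
/- Let F be a field and ℓ ≥ 2 an integer. Let a_0, …, a_ℓ ∈ F and p(z) = Σ_{k=0}^ℓ a_k z^k ∈ F[z]. Define the Horner partial evaluations h_ℓ = a_ℓ and h_k = a_k + z·h_{k+1} ∈ F[z] for k = ℓ−1 down to 1. Define ℓ×ℓ matrices over F[z] (indices from 1 to ℓ): L(z) with L_{1,1} = z·a_ℓ + a_{ℓ−1}, L_{1,j} = a_{ℓ−j} for 2 ≤ j ≤ ℓ, L_{i,i−1} = −1 and L_{i,i} = z for 2 ≤ i ≤ ℓ, and all other entries 0; E(z) with E_{1,1} = 1, E_{1,j} = h_{ℓ+1−j} for 2 ≤ j ≤ ℓ, and for 2 ≤ i ≤ ℓ, E_{i,j} = −z^{i+j−ℓ−2} if i + j ≥ ℓ + 2 and E_{i,j} = 0 otherwise; F(z) with F_{i,1} = z^{ℓ−i} for 1 ≤ i ≤ ℓ, F_{i,ℓ+1−i} = 1 for 1 ≤ i ≤ ℓ−1, and all other entries 0. Then E(z)·L(z)·F(z) = diag(p(z), 1, …, 1), and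 det E(z) ∈ {1, −1} and det F(z) ∈ {1, −1}. -/
private lemma sum_support_one {M : Type*} [AddCommMonoid M] {n : ℕ} (f : Fin n → M)
    (a : Fin n) (hf : ∀ c, c ≠ a → f c = 0) : ∑ k, f k = f a :=
  Finset.sum_eq_single_of_mem a (Finset.mem_univ a) (fun b _ hb => hf b hb)

private lemma sum_support_two {M : Type*} [AddCommMonoid M] {n : ℕ} (f : Fin n → M)
    (a b : Fin n) (hab : a ≠ b) (hf : ∀ c, c ≠ a → c ≠ b → f c = 0) :
    ∑ k, f k = f a + f b := by
  rw [← Finset.sum_subset (Finset.subset_univ {a, b})]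
  · rw [Finset.sum_pair hab]
  · intro x _ hx
    simp only [Finset.mem_insert, Finset.mem_singleton, not_or] at hx
    exact hf x hx.1 hx.2

private lemma sum_support_three {M : Type*} [AddCommMonoid M] {n : ℕ} (f : Fin n → M)
    (a b c : Fin n) (hab : a ≠ b) (hac : a ≠ c) (hbc : b ≠ c)
    (hf : ∀ d, d ≠ a → d ≠ b → d ≠ c → f d = 0) :
    ∑ k, f k = f a + f b + f c := by
  rw [← Finset.sum_subset (Finset.subset_univ {a, b, c})]
  · rw [Finset.sum_insert (by simp [hab, hac]), Finset.sum_pair hbc, add_assoc]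
  · intro x _ hx
    simp only [Finset.mem_insert, Finset.mem_singleton, not_or] at hx
    exact hf x hx.1 hx.2.1 hx.2.2


/-- Explicit unimodular cofactors for the second companion form of a
scalar polynomial `p(z) = Σ_{k=0}^ℓ a_k z^k` (grade `ℓ ≥ 2`) in the monomial basis:
with the Horner partial evaluations `h_ℓ = a_ℓ`, `h_k = a_k + z·h_{k+1}`, and with
`L`, `E`, `F` the ℓ×ℓ matrices described (indices here 0-based, shifted from the
1-based description), one has `E(z)·L(z)·F(z) = diag(p(z),1,…,1)` and
`det E, det F ∈ {1, −1}`. -/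
theorem monomial_second_companion_equivalence
    {F : Type*} [Field F] (ℓ : ℕ) (hℓ : 2 ≤ ℓ) (a : ℕ → F)
    (p : Polynomial F)
    (hp : p = ∑ k ∈ Finset.range (ℓ + 1), Polynomial.C (a k) * Polynomial.X ^ k)
    (h : ℕ → Polynomial F)
    (hhℓ : h ℓ = Polynomial.C (a ℓ))
    (hh : ∀ k, 1 ≤ k → k < ℓ → h k = Polynomial.C (a k) + Polynomial.X * h (k + 1))
    (L E Fm : Matrix (Fin ℓ) (Fin ℓ) (Polynomial F))
    (hL : ∀ i j : Fin ℓ, L i j =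
      if i.val = 0 then
        (if j.val = 0 then
          Polynomial.X * Polynomial.C (a ℓ) + Polynomial.C (a (ℓ - 1))
        else Polynomial.C (a (ℓ - 1 - j.val)))
      else if j.val + 1 = i.val then -1
      else if j = i then Polynomial.X
      else 0)
    (hE : ∀ i j : Fin ℓ, E i j =
      if i.val = 0 then
        (if j.val = 0 then 1 else h (ℓ - j.val))
      else if ℓ ≤ i.val + j.val then -(Polynomial.X ^ (i.val + j.val - ℓ))
      else 0)
    (hF : ∀ i j : Fin ℓ, Fm i j =
      if j.val = 0 then Polynomial.X ^ (ℓ - 1 - i.val)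
      else if i.val + j.val = ℓ - 1 then 1
      else 0) :
    E * L * Fm = Matrix.diagonal (fun i : Fin ℓ => if i.val = 0 then p else 1) ∧
    (E.det = 1 ∨ E.det = -1) ∧ (Fm.det = 1 ∨ Fm.det = -1) := by
  obtain ⟨n, rfl⟩ : ∃ n, ℓ = n + 2 := ⟨ℓ - 2, by omega⟩
  -- Horner expansion
  have hkey : ∀ m : ℕ, m ≤ n + 1 →
      h (n + 2 - m) = ∑ t ∈ Finset.range (m + 1),
        Polynomial.C (a (t + (n + 2 - m))) * Polynomial.X ^ t := by
    intro m
    induction m with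
    | zero => intro _; simpa using hhℓ
    | succ m ih =>
      intro hm
      have e1 : n + 2 - (m + 1) + 1 = n + 2 - m := by omega
      have h1 : h (n + 2 - (m + 1)) =
          Polynomial.C (a (n + 2 - (m + 1))) + Polynomial.X * h (n + 2 - m) := by
        rw [hh (n + 2 - (m + 1)) (by omega) (by omega), e1]
      rw [h1, ih (by omega)]
      conv_rhs => rw [Finset.sum_range_succ']
      simp only [pow_zero, mul_one, Nat.zero_add]
      rw [add_comm]
      congr 1
      rw [Finset.mul_sum]
      apply Finset.sum_congr rfl
      intro t _
      have e2 : t + 1 + (n + 2 - (m + 1)) = t + (n + 2 - m) := by omega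
      rw [e2, pow_succ]
      ring
  have hp1 : p = Polynomial.C (a 0) + Polynomial.X * h 1 := by
    have h1 := hkey (n + 1) (le_refl _)
    have e : n + 2 - (n + 1) = 1 := by omega
    rw [e] at h1
    rw [hp, h1]
    conv_lhs => rw [Finset.sum_range_succ']
    simp only [pow_zero, mul_one]
    rw [add_comm]
    congr 1
    rw [Finset.mul_sum]
    apply Finset.sum_congr rfl
    intro t _
    rw [pow_succ]
    ring
  -- the product E * L
  have hEL : ∀ i j : Fin (n + 2), (E * L) i j =
      if i.val = 0 then (if j.val = n + 1 then p else 0)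
      else if j.val = n + 1 then -(Polynomial.X ^ i.val)
      else if i.val + j.val = n + 1 then 1 else 0 := by
    intro i j
    rw [Matrix.mul_apply]
    by_cases hi : i.val = 0
    · rw [if_pos hi]
      by_cases hj : j.val = n + 1
      · -- support {0, j}, value p
        rw [if_pos hj]
        have hz : ∀ c : Fin (n+2), c ≠ ⟨0, by omega⟩ → c ≠ j → E i c * L c j = 0 := by
          intro c hc0 hcj
          have hlt := c.isLt
          simp only [ne_eq, Fin.ext_iff] at hc0 hcj
          rw [hL, if_neg (by simpa using hc0), if_neg (by omega),
            if_neg (by simp only [Fin.ext_iff]; omega), mul_zero]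
        rw [sum_support_two _ ⟨0, by omega⟩ j (by simp [Fin.ext_iff]; omega) hz]
        rw [hE, hE, hL, hL]
        simp only [hi, hj]
        norm_num
        rw [show n + 2 - (n + 1) = 1 from by omega, hp1]
        ring
      · rw [if_neg hj]
        by_cases hj0 : j.val = 0
        · -- support {0, 1}, value 0
          have hz : ∀ c : Fin (n+2), c ≠ ⟨0, by omega⟩ → c ≠ ⟨1, by omega⟩ →
              E i c * L c j = 0 := by
            intro c hc0 hc1
            have hlt := c.isLt
            simp only [ne_eq, Fin.ext_iff] at hc0 hc1
            rw [hL, if_neg (by simpa using hc0), if_neg (by omega),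
              if_neg (by simp only [Fin.ext_iff]; omega), mul_zero]
          rw [sum_support_two _ ⟨0, by omega⟩ ⟨1, by omega⟩ (by simp [Fin.ext_iff]) hz]
          rw [hE, hE, hL, hL]
          simp only [hi, hj0]
          norm_num
          rw [hh (n + 1) (by omega) (by omega), hhℓ]
          ring
        · -- 1 ≤ j ≤ n : support {0, j, j+1}, value 0
          have hjlt := j.isLt
          have hz : ∀ c : Fin (n+2), c ≠ ⟨0, by omega⟩ → c ≠ j →
              c ≠ ⟨j.val + 1, by omega⟩ → E i c * L c j = 0 := by
            intro c hc0 hcj hcj1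
            have hlt := c.isLt
            simp only [ne_eq, Fin.ext_iff] at hc0 hcj hcj1
            rw [hL, if_neg (by simpa using hc0), if_neg (by omega),
              if_neg (by simp only [Fin.ext_iff]; omega), mul_zero]
          rw [sum_support_three _ ⟨0, by omega⟩ j ⟨j.val + 1, by omega⟩
            (by simp [Fin.ext_iff]; omega) (by simp only [ne_eq, Fin.ext_iff, Fin.val_mk]; omega) (by simp [Fin.ext_iff]) hz]
          rw [hE, hE, hE, hL, hL, hL]
          simp only [hi, hj0]
          norm_num
          rw [show n + 2 - (j.val + 1) = n + 1 - j.val from by omega,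
            hh (n + 1 - j.val) (by omega) (by omega),
            show n + 1 - j.val + 1 = n + 2 - j.val from by omega]
          ring
    · rw [if_neg hi]
      have hilt := i.isLt
      by_cases hj : j.val = n + 1
      · -- support {j}, value -X^i
        rw [if_pos hj]
        have hz : ∀ c : Fin (n+2), c ≠ j → E i c * L c j = 0 := by
          intro c hcj
          have hlt := c.isLt
          simp only [ne_eq, Fin.ext_iff] at hcj
          by_cases hc0 : c.val = 0
          · rw [hE, if_neg hi, if_neg (by omega), zero_mul]
          · rw [hL, if_neg hc0, if_neg (by omega),
              if_neg (by simp only [Fin.ext_iff]; omega), mul_zero]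
        rw [sum_support_one _ j hz]
        rw [hE, hL, if_neg hi, if_pos (show n + 2 ≤ i.val + j.val from by omega),
          if_neg (show ¬(j.val = 0) from by omega),
          if_neg (show ¬(j.val + 1 = j.val) from by omega), if_pos rfl]
        rw [hj, neg_mul, ← pow_succ,
          show i.val + (n + 1) - (n + 2) + 1 = i.val from by omega]
      · rw [if_neg hj]
        have hjlt := j.isLt
        -- support {j, j+1}
        have hz : ∀ c : Fin (n+2), c ≠ j → c ≠ ⟨j.val + 1, by omega⟩ →
            E i c * L c j = 0 := by
          intro c hcj hcj1
          have hlt := c.isLt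
          simp only [ne_eq, Fin.ext_iff] at hcj hcj1
          by_cases hc0 : c.val = 0
          · rw [hE, if_neg hi, if_neg (by omega), zero_mul]
          · rw [hL, if_neg hc0, if_neg (by omega),
              if_neg (by simp only [Fin.ext_iff]; omega), mul_zero]
        have hB' : L ⟨j.val + 1, by omega⟩ j = -1 := by
          rw [hL, if_neg (show ¬((⟨j.val + 1, by omega⟩ : Fin (n+2)).val = 0) from
            Nat.succ_ne_zero _), if_pos (show j.val + 1 = (j.val + 1) from rfl)]
        rw [sum_support_two _ j ⟨j.val + 1, by omega⟩ (by simp [Fin.ext_iff]) hz, hB']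
        rw [hE, hE, if_neg hi, if_neg hi]
        simp only [Fin.val_mk]
        by_cases hc : n + 2 ≤ i.val + j.val
        · rw [if_neg (show ¬(i.val + j.val = n + 1) from by omega)]
          rw [if_pos hc,
            if_pos (show n + 2 ≤ i.val + (j.val + 1) from by omega)]
          rw [hL, if_neg (show ¬(j.val = 0) from by omega),
            if_neg (show ¬(j.val + 1 = j.val) from by omega), if_pos rfl]
          rw [show i.val + (j.val + 1) - (n + 2)
              = (i.val + j.val - (n + 2)) + 1 from by omega, pow_succ]
          ring
        · by_cases hd : i.val + j.val = n + 1
          · rw [if_pos hd, if_neg hc, zero_mul,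
              if_pos (show n + 2 ≤ i.val + (j.val + 1) from by omega),
              show i.val + (j.val + 1) - (n + 2) = 0 from by omega, pow_zero]
            ring
          · rw [if_neg hd, if_neg hc, zero_mul,
              if_neg (show ¬(n + 2 ≤ i.val + (j.val + 1)) from by omega), zero_mul, add_zero]
  refine ⟨?_, ?_, ?_⟩
  · -- the product identity
    apply Matrix.ext
    intro i j
    rw [Matrix.mul_apply]
    have hilt := i.isLt
    have hjlt := j.isLt
    by_cases hj0 : j.val = 0
    · by_cases hi : i.val = 0
      · have hij : i = j := Fin.ext (by omega)
        subst hij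
        rw [Matrix.diagonal_apply_eq, if_pos hi]
        have hz : ∀ c : Fin (n+2), c ≠ ⟨n+1, by omega⟩ → (E * L) i c * Fm c i = 0 := by
          intro c hc
          have hclt := c.isLt
          simp only [ne_eq, Fin.ext_iff, Fin.val_mk] at hc
          rw [hEL, if_pos hi, if_neg (by omega), zero_mul]
        rw [sum_support_one _ ⟨n+1, by omega⟩ hz]
        rw [hEL, hF, if_pos hi, if_pos (show ((⟨n+1, by omega⟩ : Fin (n+2)) : ℕ) = n + 1 from rfl),
          if_pos hj0, show n + 2 - 1 - ((⟨n+1, by omega⟩ : Fin (n+2)) : ℕ) = 0 from by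
            simp only [Fin.val_mk]; omega, pow_zero, mul_one]
      · rw [Matrix.diagonal_apply_ne _ (show i ≠ j from fun hq => hi (by rw [hq]; exact hj0))]
        have hz : ∀ c : Fin (n+2), c ≠ ⟨n + 1 - i.val, by omega⟩ → c ≠ ⟨n+1, by omega⟩ →
            (E * L) i c * Fm c j = 0 := by
          intro c hc1 hc2
          have hclt := c.isLt
          simp only [ne_eq, Fin.ext_iff, Fin.val_mk] at hc1 hc2
          rw [hEL, if_neg hi, if_neg (by omega), if_neg (by omega), zero_mul]
        rw [sum_support_two _ ⟨n + 1 - i.val, by omega⟩ ⟨n+1, by omega⟩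
          (by simp only [ne_eq, Fin.ext_iff, Fin.val_mk]; omega) hz]
        rw [hEL, hEL, hF, hF, if_neg hi, if_neg hi, if_pos hj0, if_pos hj0]
        simp only [Fin.val_mk]
        rw [if_neg (show ¬(n + 1 - i.val = n + 1) from by omega),
          if_pos (show i.val + (n + 1 - i.val) = n + 1 from by omega),
          if_pos trivial]
        rw [show n + 2 - 1 - (n + 1 - i.val) = i.val from by omega,
          show n + 2 - 1 - (n + 1) = 0 from by omega, pow_zero]
        ring
    · have hz : ∀ c : Fin (n+2), c ≠ ⟨n + 1 - j.val, by omega⟩ →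
          (E * L) i c * Fm c j = 0 := by
        intro c hc
        have hclt := c.isLt
        simp only [ne_eq, Fin.ext_iff, Fin.val_mk] at hc
        rw [hF, if_neg hj0, if_neg (by omega), mul_zero]
      rw [sum_support_one _ ⟨n + 1 - j.val, by omega⟩ hz]
      rw [hEL, hF]
      simp only [Fin.val_mk]
      rw [if_neg hj0, if_pos (show n + 1 - j.val + j.val = n + 2 - 1 from by omega), mul_one]
      by_cases hi : i.val = 0
      · rw [if_pos hi, if_neg (show ¬(n + 1 - j.val = n + 1) from by omega),
          Matrix.diagonal_apply_ne _ (show i ≠ j from fun hq => hj0 (by rw [← hq]; exact hi))]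
      · rw [if_neg hi, if_neg (show ¬(n + 1 - j.val = n + 1) from by omega)]
        by_cases hij : i.val = j.val
        · have hij' : i = j := Fin.ext hij
          subst hij'
          rw [if_pos (by omega), Matrix.diagonal_apply_eq, if_neg hi]
        · rw [if_neg (by omega),
            Matrix.diagonal_apply_ne _ (show i ≠ j from fun hq => hij (by rw [hq]))]
  · -- det E
    have hρ : ∀ x : Fin (n+2), x.val ≠ n + 1 → (finRotate (n+2) x).val = x.val + 1 := by
      intro x hx
      rw [finRotate_succ_apply, Fin.val_add_one,
        if_neg (show ¬(x = Fin.last (n+1)) from fun hq => hx (by rw [hq]; rfl))]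
    have hρ' : (finRotate (n+2) (⟨n+1, by omega⟩ : Fin (n+2))).val = 0 := by
      rw [finRotate_succ_apply, Fin.val_add_one,
        if_pos (show (⟨n+1, by omega⟩ : Fin (n+2)) = Fin.last (n+1) from rfl)]
    have hrev : ∀ y : Fin (n+2), (Fin.revPerm y).val = n + 1 - y.val := by
      intro y
      rw [Fin.revPerm_apply, Fin.val_rev]
      omega
    set A : Matrix (Fin (n+2)) (Fin (n+2)) (Polynomial F) :=
      (E.submatrix (finRotate (n+2)) id).submatrix id Fin.revPerm with hA
    have hAapp : ∀ x y : Fin (n+2), A x y = E (finRotate (n+2) x) (Fin.revPerm y) := by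
      intro x y; rw [hA]; rfl
    have htri : A.BlockTriangular OrderDual.toDual := by
      intro x y hxy
      have hxy' : x < y := hxy
      rw [Fin.lt_def] at hxy'
      have hylt := y.isLt
      rw [hAapp, hE, hρ x (by omega), hrev, if_neg (by omega), if_neg (by omega)]
    have hdiag : ∀ x : Fin (n+2), A x x =
        if x.val = n + 1 then 1 else -1 := by
      intro x
      have hxlt := x.isLt
      by_cases hx : x.val = n + 1
      · have hx' : x = (⟨n+1, by omega⟩ : Fin (n+2)) := Fin.ext hx
        rw [if_pos hx, hAapp, hE, hx', hρ', hrev]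
        rw [if_pos rfl, show n + 1 - ((⟨n+1, by omega⟩ : Fin (n+2)) : ℕ) = 0 from by
          simp only [Fin.val_mk]; omega]
        exact if_pos rfl
      · rw [if_neg hx, hAapp, hE, hρ x hx, hrev, if_neg (by omega),
          if_pos (show n + 2 ≤ x.val + 1 + (n + 1 - x.val) from by omega),
          show x.val + 1 + (n + 1 - x.val) - (n + 2) = 0 from by omega, pow_zero]
    have hAdet : A.det = (-1 : Polynomial F) ^ (n + 1) := by
      rw [Matrix.det_of_lowerTriangular A htri]
      rw [Finset.prod_congr rfl (fun x _ => hdiag x)]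
      rw [← Finset.mul_prod_erase _ _ (Finset.mem_univ (⟨n+1, by omega⟩ : Fin (n+2)))]
      rw [if_pos (show ((⟨n+1, by omega⟩ : Fin (n+2)) : ℕ) = n + 1 from rfl), one_mul]
      rw [Finset.prod_congr rfl (fun x hx => if_neg (show ¬(x.val = n + 1) from by
        have := Finset.ne_of_mem_erase hx
        simp only [ne_eq, Fin.ext_iff, Fin.val_mk] at this
        exact this))]
      rw [Finset.prod_const, Finset.card_erase_of_mem (Finset.mem_univ _),
        Finset.card_univ, Fintype.card_fin]
      norm_num
    have h2 : A.det = (Equiv.Perm.sign (Fin.revPerm : Equiv.Perm (Fin (n+2))) : ℤ) *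
        (((Equiv.Perm.sign (finRotate (n+2)) : ℤ)) * E.det) := by
      rw [hA, Matrix.det_permute', Matrix.det_permute]
    rw [hAdet] at h2
    rcases Int.units_eq_one_or (Equiv.Perm.sign (Fin.revPerm : Equiv.Perm (Fin (n+2)))) with hs1 | hs1 <;>
      rcases Int.units_eq_one_or (Equiv.Perm.sign (finRotate (n+2))) with hs2 | hs2 <;>
      rw [hs1, hs2] at h2 <;>
      rcases Nat.even_or_odd (n+1) with hpar | hpar <;>
      rw [hpar.neg_one_pow] at h2 <;>
      simp only [Units.val_one, Units.val_neg, Int.cast_one, Int.cast_neg, one_mul,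
        neg_mul, mul_one, neg_neg, one_mul] at h2 <;>
      first
        | exact Or.inl (by linear_combination h2)
        | exact Or.inl (by linear_combination -h2)
        | exact Or.inr (by linear_combination h2)
        | exact Or.inr (by linear_combination -h2)
  · -- det Fm
    have hrev : ∀ y : Fin (n+2), (Fin.revPerm y).val = n + 1 - y.val := by
      intro y
      rw [Fin.revPerm_apply, Fin.val_rev]
      omega
    set B : Matrix (Fin (n+2)) (Fin (n+2)) (Polynomial F) :=
      Fm.submatrix Fin.revPerm id with hB
    have hBapp : ∀ x y : Fin (n+2), B x y = Fm (Fin.revPerm x) y := by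
      intro x y; rw [hB]; rfl
    have htri : B.BlockTriangular OrderDual.toDual := by
      intro x y hxy
      have hxy' : x < y := hxy
      rw [Fin.lt_def] at hxy'
      have hylt := y.isLt
      rw [hBapp, hF, hrev, if_neg (by omega), if_neg (by omega)]
    have hdiagB : ∀ x : Fin (n+2), B x x = 1 := by
      intro x
      have hxlt := x.isLt
      by_cases hx : x.val = 0
      · rw [hBapp, hF, hrev, if_pos hx, show n + 2 - 1 - (n + 1 - x.val) = 0 from by omega,
          pow_zero]
      · rw [hBapp, hF, hrev, if_neg hx,
          if_pos (show n + 1 - x.val + x.val = n + 2 - 1 from by omega)]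
    have hBdet : B.det = 1 := by
      rw [Matrix.det_of_lowerTriangular B htri]
      rw [Finset.prod_congr rfl (fun x _ => hdiagB x), Finset.prod_const_one]
    have h2 : B.det = (Equiv.Perm.sign (Fin.revPerm : Equiv.Perm (Fin (n+2))) : ℤ) * Fm.det := by
      rw [hB, Matrix.det_permute]
    rw [hBdet] at h2
    rcases Int.units_eq_one_or (Equiv.Perm.sign (Fin.revPerm : Equiv.Perm (Fin (n+2)))) with hs1 | hs1 <;>
      rw [hs1] at h2 <;>
      simp only [Units.val_one, Units.val_neg, Int.cast_one, Int.cast_neg, one_mul,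
        neg_mul, mul_one, neg_neg] at h2 <;>
      first
        | exact Or.inl (by linear_combination h2)
        | exact Or.inl (by linear_combination -h2)
        | exact Or.inr (by linear_combination h2)
end

section
/- Let F be a field and ℓ ≥ 2. Let α_k, β_k, γ_k ∈ F for 0 ≤ k ≤ ℓ−1 with every α_k ≠ 0, and define the degree-graded polynomial basis φ_0 = 1, φ_1 = (z − β_0)/α_0, and φ_{k+1} = ((z − β_k)φ_k − γ_k φ_{k−1})/α_k for 1 ≤ k ≤ ℓ−1. Let a_0, …, a_ℓ ∈ F and p(z) = Σ_{k=0}^ℓ a_k φ_k(z). Define the ℓ×ℓ pencil L(z) = z·C_1 − C_0 over F[z], where C_1 = diag(a_ℓ/α_{ℓ−1}, 1, …, 1) and C_0 has first row (−a_{ℓ−1} + (β_{ℓ−1}/α_{ℓ−1})a_ℓ, −a_{ℓ−2} + (γ_{ℓ−1}/α_{ℓ−1})a_ℓ, −a_{ℓ−3}, …, −a_0), and for 2 ≤ i ≤ ℓ the entries α_{ℓ−i}, β_{ℓ−i}, γ_{ℓ−i} in columns i−1, i, i+1 respectively (the entry γ_{ℓ−i} being omitted when i = ℓ), with all other entries 0.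 Then det L(z) = (∏_{k=0}^{ℓ−2} α_k) · p(z); in particular L(z) is a companion pencil for p. -/
open Polynomial Matrix Finset


/-- For a degree-graded basis `φ_k` defined by a three-term recurrence
`z·φ_k = α_k φ_{k+1} + β_k φ_k + γ_k φ_{k−1}` (all `α_k ≠ 0`) and
`p(z) = Σ_{k=0}^ℓ a_k φ_k(z)` with `ℓ ≥ 2`, the ℓ×ℓ pencil `L(z) = z·C_1 − C_0`
described below (comrade/colleague form, indices here 0-based, shifted from the
1-based description) satisfies `det L(z) = (∏_{k=0}^{ℓ−2} α_k)·p(z)`; in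
particular it is a companion pencil for `p`. -/
theorem three_term_recurrence_companion_det
    {F : Type*} [Field F] (ℓ : ℕ) (hℓ : 2 ≤ ℓ)
    (α β γ : ℕ → F) (hα : ∀ k < ℓ, α k ≠ 0)
    (φ : ℕ → Polynomial F)
    (hφ0 : φ 0 = 1)
    (hφ1 : φ 1 = Polynomial.C (α 0)⁻¹ * (Polynomial.X - Polynomial.C (β 0)))
    (hφ : ∀ k, 1 ≤ k → k ≤ ℓ - 1 →
      φ (k + 1) = Polynomial.C (α k)⁻¹ *
        ((Polynomial.X - Polynomial.C (β k)) * φ k - Polynomial.C (γ k) * φ (k - 1)))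
    (a : ℕ → F)
    (p : Polynomial F)
    (hp : p = ∑ k ∈ Finset.range (ℓ + 1), Polynomial.C (a k) * φ k)
    (C1 C0 : Matrix (Fin ℓ) (Fin ℓ) F)
    (hC1 : C1 = Matrix.diagonal (fun i : Fin ℓ =>
      if i.val = 0 then a ℓ / α (ℓ - 1) else 1))
    (hC0 : ∀ i j : Fin ℓ, C0 i j =
      if i.val = 0 then
        (if j.val = 0 then -a (ℓ - 1) + (β (ℓ - 1) / α (ℓ - 1)) * a ℓ
         else if j.val = 1 then -a (ℓ - 2) + (γ (ℓ - 1) / α (ℓ - 1)) * a ℓ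
         else -a (ℓ - 1 - j.val))
      else if j.val + 1 = i.val then α (ℓ - 1 - i.val)
      else if j = i then β (ℓ - 1 - i.val)
      else if j.val = i.val + 1 then γ (ℓ - 1 - i.val)
      else 0) :
    Matrix.det
      ((Polynomial.X : Polynomial F) • C1.map Polynomial.C - C0.map Polynomial.C) =
    Polynomial.C (∏ k ∈ Finset.range (ℓ - 1), α k) * p := by
  obtain ⟨m, rfl⟩ : ∃ m, ℓ = m + 2 := ⟨ℓ - 2, by omega⟩
  obtain ⟨L, hLdef⟩ : ∃ L : Matrix (Fin (m + 2)) (Fin (m + 2)) (Polynomial F),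
      L = (Polynomial.X : Polynomial F) • C1.map Polynomial.C - C0.map Polynomial.C :=
    ⟨_, rfl⟩
  rw [← hLdef]
  have hLe : ∀ i j, L i j = Polynomial.X * Polynomial.C (C1 i j) - Polynomial.C (C0 i j) := by
    intro i j
    simp [hLdef, Matrix.sub_apply, Matrix.smul_apply, Matrix.map_apply, smul_eq_mul]
  have hrec : ∀ k, 1 ≤ k → k ≤ m + 1 →
      Polynomial.C (α k) * φ (k + 1)
        = (Polynomial.X - Polynomial.C (β k)) * φ k - Polynomial.C (γ k) * φ (k - 1) := by
    intro k h1 h2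
    rw [hφ k h1 (by omega), ← mul_assoc, ← Polynomial.C_mul,
      mul_inv_cancel₀ (hα k (by omega)), Polynomial.C_1, one_mul]
  have hrec0 : Polynomial.C (α 0) * φ 1 = Polynomial.X - Polynomial.C (β 0) := by
    rw [hφ1, ← mul_assoc, ← Polynomial.C_mul, mul_inv_cancel₀ (hα 0 (by omega)),
      Polynomial.C_1, one_mul]
  obtain ⟨v, hv⟩ : ∃ v : Fin (m + 2) → Polynomial F,
      v = fun i => φ (m + 1 - i.val) := ⟨_, rfl⟩
  obtain ⟨b, hb⟩ : ∃ b : Fin (m + 2) → Polynomial F,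
      b = fun i : Fin (m + 2) => if i.val = 0 then p else 0 := ⟨_, rfl⟩
  have hvap : ∀ j : Fin (m + 2), v j = φ (m + 1 - j.val) := fun j => by
    rw [hv]
  have key : L *ᵥ v = b := by
    funext i
    rw [Matrix.mulVec, dotProduct]
    by_cases hi0 : i.val = 0
    · -- row 0
      have hi : i = 0 := Fin.ext hi0
      subst hi
      have hsummand : ∀ j : Fin (m + 2), L 0 j * v j =
          Polynomial.C (a (m + 1 - j.val)) * φ (m + 1 - j.val)
          + (if j = 0 then
              (Polynomial.X * Polynomial.C (a (m + 2) / α (m + 1))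
                - Polynomial.C ((β (m + 1) / α (m + 1)) * a (m + 2))) * φ (m + 1) else 0)
          + (if j = 1 then
              -(Polynomial.C ((γ (m + 1) / α (m + 1)) * a (m + 2)) * φ m) else 0) := by
        intro j
        by_cases hj0 : j = 0
        · subst hj0
          have hc1 : C1 0 0 = a (m + 2) / α (m + 1) := by
            rw [hC1, Matrix.diagonal_apply_eq]; norm_num
          have hc0 : C0 0 0 = -a (m + 1) + (β (m + 1) / α (m + 1)) * a (m + 2) := by
            rw [hC0]; norm_num
          have hv0 : v 0 = φ (m + 1) := by rw [hvap]; norm_num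
          rw [hLe, hc1, hc0, hv0, if_pos rfl, if_neg (by simp : ¬((0:Fin (m+2)) = 1))]
          simp only [Fin.val_zero, Nat.sub_zero, map_add, map_neg]
          ring
        · by_cases hj1 : j = 1
          · subst hj1
            have hc1 : C1 0 1 = 0 := by
              rw [hC1]; exact Matrix.diagonal_apply_ne _ (by simp)
            have hc0 : C0 0 1 = -a m + (γ (m + 1) / α (m + 1)) * a (m + 2) := by
              rw [hC0]; norm_num
            have hv1 : v 1 = φ m := by rw [hvap]; norm_num [Fin.val_one]
            rw [hLe, hc1, hc0, hv1, if_neg (by simp : ¬((1:Fin (m+2)) = 0)), if_pos rfl]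
            have : ((1 : Fin (m + 2)) : ℕ) = 1 := rfl
            rw [this]
            simp only [map_add, _root_.map_neg]
            norm_num <;> ring
          · have hjv0 : ¬ (j.val = 0) := fun h => hj0 (Fin.ext h)
            have hjv1 : ¬ (j.val = 1) := fun h => hj1 (Fin.ext h)
            have hc1 : C1 0 j = 0 := by
              rw [hC1]; exact Matrix.diagonal_apply_ne _ (fun h => hj0 h.symm)
            have hc0 : C0 0 j = -a (m + 1 - j.val) := by
              rw [hC0, if_pos (show ((0 : Fin (m+2)) : ℕ) = 0 from rfl), if_neg hjv0,
                if_neg hjv1]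
              congr 1 <;> omega
            have hvj : v j = φ (m + 1 - j.val) := hvap j
            rw [hLe, hc1, hc0, hvj, if_neg hj0, if_neg hj1]
            simp only [map_neg]
            simp only [_root_.map_zero, _root_.map_one, mul_zero, zero_mul, mul_one]; ring
      rw [Finset.sum_congr rfl (fun j _ => hsummand j)]
      simp only [Finset.sum_add_distrib, Finset.sum_ite_eq' Finset.univ, Finset.mem_univ, if_true]
      have hsum : ∑ j : Fin (m + 2), Polynomial.C (a (m + 1 - j.val)) * φ (m + 1 - j.val)
          = ∑ k ∈ Finset.range (m + 2), Polynomial.C (a k) * φ k := by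
        rw [Fin.sum_univ_eq_sum_range (fun k => Polynomial.C (a (m + 1 - k)) * φ (m + 1 - k))]
        exact Finset.sum_range_reflect (fun k => Polynomial.C (a k) * φ k) (m + 2)
      rw [hsum]
      have hA : α (m + 1) ≠ 0 := hα (m + 1) (by omega)
      have hr : Polynomial.C (α (m + 1)) * φ (m + 2)
          = (Polynomial.X - Polynomial.C (β (m + 1))) * φ (m + 1)
            - Polynomial.C (γ (m + 1)) * φ m := by
        simpa using hrec (m + 1) (by omega) (by omega)
      have main : (Polynomial.X * Polynomial.C (a (m + 2) / α (m + 1))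
            - Polynomial.C ((β (m + 1) / α (m + 1)) * a (m + 2))) * φ (m + 1)
          + -(Polynomial.C ((γ (m + 1) / α (m + 1)) * a (m + 2)) * φ m)
          = Polynomial.C (a (m + 2)) * φ (m + 2) := by
        have e1 : (β (m + 1) / α (m + 1)) * a (m + 2)
            = (a (m + 2) / α (m + 1)) * β (m + 1) := by ring
        have e2 : (γ (m + 1) / α (m + 1)) * a (m + 2)
            = (a (m + 2) / α (m + 1)) * γ (m + 1) := by ring
        have e3 : Polynomial.C (a (m + 2))
            = Polynomial.C (a (m + 2) / α (m + 1)) * Polynomial.C (α (m + 1)) := by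
          rw [← Polynomial.C_mul, div_mul_cancel₀ _ hA]
        rw [e1, e2, e3, mul_assoc, hr, Polynomial.C_mul, Polynomial.C_mul]
        ring
      have hb0 : b 0 = p := congrFun hb 0
      rw [hb0, hp]
      rw [Finset.sum_range_succ (fun k => Polynomial.C (a k) * φ k) (m + 2)]
      rw [add_assoc, main]
    · -- rows i ≥ 1
      have hbi : b i = 0 := by rw [hb]; simp [hi0]
      rw [hbi]
      by_cases hlast : i.val = m + 1
      · -- last row
        set jp : Fin (m + 2) := ⟨m, by omega⟩ with hjp
        have hsummand : ∀ j : Fin (m + 2), L i j * v j =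
            (if j = jp then -(Polynomial.C (α 0) * φ 1) else 0)
            + (if j = i then (Polynomial.X - Polynomial.C (β 0)) * φ 0 else 0) := by
          intro j
          rw [hLe, hC1, hC0]
          by_cases hj : j = jp
          · subst hj
            have h1 : jp.val + 1 = i.val := by show m + 1 = i.val; omega
            have h2 : jp ≠ i := by
              intro h; rw [h] at h1; omega
            have hc1 : Matrix.diagonal (fun i : Fin (m+2) =>
                if i.val = 0 then a (m+2) / α (m + 2 - 1) else 1) i jp = 0 :=
              Matrix.diagonal_apply_ne' _ h2
            have he : m + 2 - 1 - i.val = 0 := by omega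
            have hvj : v jp = φ 1 := by
              rw [hvap, show (jp : ℕ) = m from rfl]; congr 1 <;> omega
            rw [hc1, if_neg hi0, if_pos h1, he, hvj, if_pos rfl, if_neg h2]
            simp only [_root_.map_zero, _root_.map_one, mul_zero, zero_mul, mul_one]; ring
          · by_cases hj2 : j = i
            · subst hj2
              have h1 : ¬ (j.val + 1 = j.val) := by omega
              have he : m + 2 - 1 - j.val = 0 := by omega
              have hvj : v j = φ 0 := by rw [hvap]; congr 1 <;> omega
              have hc1 : Matrix.diagonal (fun i : Fin (m+2) =>
                  if i.val = 0 then a (m+2) / α (m + 2 - 1) else 1) j j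
                  = 1 := by rw [Matrix.diagonal_apply_eq]; rw [if_neg hi0]
              rw [hc1, if_neg hi0, if_neg h1, if_pos rfl, he, hvj,
                if_neg (fun h => hj (h : j = jp)), if_pos rfl]
              simp only [_root_.map_zero, _root_.map_one, mul_zero, zero_mul, mul_one]; ring
            · have h1 : ¬ (j.val + 1 = i.val) := by
                intro h
                exact hj (Fin.ext (by show j.val = m; omega))
              have h2 : ¬ (j.val = i.val + 1) := by omega
              have hc1 : Matrix.diagonal (fun i : Fin (m+2) =>
                  if i.val = 0 then a (m+2) / α (m + 2 - 1) else 1) i j = 0 :=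
                Matrix.diagonal_apply_ne' _ hj2
              rw [hc1, if_neg hi0, if_neg h1, if_neg hj2, if_neg h2,
                if_neg hj, if_neg hj2]
              simp only [_root_.map_zero, _root_.map_one, mul_zero, zero_mul, mul_one]; ring
        rw [Finset.sum_congr rfl (fun j _ => hsummand j)]
        simp only [Finset.sum_add_distrib, Finset.sum_ite_eq' Finset.univ, Finset.mem_univ, if_true]
        rw [hφ0, hrec0]
        ring
      · -- middle rows: 1 ≤ i.val ≤ m
        set k : ℕ := m + 1 - i.val with hk
        set jp : Fin (m + 2) := ⟨i.val - 1, by omega⟩ with hjp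
        set jn : Fin (m + 2) := ⟨i.val + 1, by omega⟩ with hjn
        have hsummand : ∀ j : Fin (m + 2), L i j * v j =
            (if j = jp then -(Polynomial.C (α k) * φ (k + 1)) else 0)
            + (if j = i then (Polynomial.X - Polynomial.C (β k)) * φ k else 0)
            + (if j = jn then -(Polynomial.C (γ k) * φ (k - 1)) else 0) := by
          intro j
          rw [hLe, hC1, hC0]
          have hkval : m + 2 - 1 - i.val = k := by omega
          by_cases hj : j = jp
          · subst hj
            have h1 : jp.val + 1 = i.val := by show i.val - 1 + 1 = i.val; omega
            have h2 : jp ≠ i := fun h => by rw [h] at h1; omega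
            have h3 : jp ≠ jn := fun h => by
              have : jp.val = jn.val := congrArg Fin.val h
              rw [show jp.val = i.val - 1 from rfl, show jn.val = i.val + 1 from rfl] at this
              omega
            have hvj : v jp = φ (k + 1) := by
              rw [hvap, show (jp : ℕ) = i.val - 1 from rfl]; congr 1 <;> omega
            have hc1 : Matrix.diagonal (fun i : Fin (m+2) =>
                if i.val = 0 then a (m+2) / α (m + 2 - 1) else 1) i jp = 0 :=
              Matrix.diagonal_apply_ne' _ h2
            rw [hc1, if_neg hi0, if_pos h1, hkval, hvj, if_pos rfl, if_neg h2, if_neg h3]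
            simp only [_root_.map_zero, _root_.map_one, mul_zero, zero_mul, mul_one]; ring
          · by_cases hj2 : j = i
            · subst hj2
              have h1 : ¬ (j.val + 1 = j.val) := by omega
              have h4 : j ≠ jn := fun h => by
                have : j.val = jn.val := congrArg Fin.val h
                rw [show jn.val = j.val + 1 from rfl] at this; omega
              have hvj : v j = φ k := by rw [hvap]
              have hc1 : Matrix.diagonal (fun i : Fin (m+2) =>
                  if i.val = 0 then a (m+2) / α (m + 2 - 1) else 1) j j = 1 := by
                rw [Matrix.diagonal_apply_eq]; rw [if_neg hi0]
              rw [hc1, if_neg hi0, if_neg h1, if_pos rfl, hkval, hvj,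
                if_neg (fun h => hj (h : j = jp)), if_pos rfl, if_neg h4]
              simp only [_root_.map_zero, _root_.map_one, mul_zero, zero_mul, mul_one]; ring
            · by_cases hj3 : j = jn
              · subst hj3
                have h1 : ¬ (jn.val + 1 = i.val) := by show ¬ (i.val + 1 + 1 = i.val); omega
                have h2 : jn.val = i.val + 1 := rfl
                have hvj : v jn = φ (k - 1) := by
                  rw [hvap, show (jn : ℕ) = i.val + 1 from rfl]; congr 1 <;> omega
                have hc1 : Matrix.diagonal (fun i : Fin (m+2) =>
                    if i.val = 0 then a (m+2) / α (m + 2 - 1) else 1) i jn = 0 :=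
                  Matrix.diagonal_apply_ne' _ hj2
                rw [hc1, if_neg hi0, if_neg h1, if_neg hj2, if_pos h2, hkval, hvj,
                  if_neg hj, if_neg hj2, if_pos rfl]
                simp only [_root_.map_zero, _root_.map_one, mul_zero, zero_mul, mul_one]; ring
              · have h1 : ¬ (j.val + 1 = i.val) := fun h =>
                  hj (Fin.ext (by show j.val = i.val - 1; omega))
                have h2 : ¬ (j.val = i.val + 1) := fun h =>
                  hj3 (Fin.ext (by show j.val = i.val + 1; omega))
                have hc1 : Matrix.diagonal (fun i : Fin (m+2) =>
                    if i.val = 0 then a (m+2) / α (m + 2 - 1) else 1) i j = 0 :=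
                  Matrix.diagonal_apply_ne' _ hj2
                rw [hc1, if_neg hi0, if_neg h1, if_neg hj2, if_neg h2,
                  if_neg hj, if_neg hj2, if_neg hj3]
                simp only [_root_.map_zero, _root_.map_one, mul_zero, zero_mul, mul_one]; ring
        rw [Finset.sum_congr rfl (fun j _ => hsummand j)]
        simp only [Finset.sum_add_distrib, Finset.sum_ite_eq' Finset.univ, Finset.mem_univ, if_true]
        rw [hrec k (by omega) (by omega)]
        ring
  have goal2 : L.det = Polynomial.C (∏ k ∈ Finset.range (m + 1), α k) * p := by
    have hvlast : v (Fin.last (m + 1)) = 1 := by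
      rw [hv]
      show φ (m + 1 - (m + 1)) = 1
      rw [Nat.sub_self, hφ0]
    have hdet : (L.updateCol (Fin.last (m + 1)) b).det = L.det := by
      rw [← Matrix.cramer_apply, Matrix.cramer_eq_adjugate_mulVec, ← key, Matrix.mulVec_mulVec,
        Matrix.adjugate_mul, Matrix.smul_mulVec, Matrix.one_mulVec]
      simp [hvlast]
    set M : Matrix (Fin (m + 2)) (Fin (m + 2)) (Polynomial F) :=
      L.updateCol (Fin.last (m + 1)) b with hM
    have hexp := Matrix.det_succ_column M (Fin.last (m + 1))
    have hterm : ∀ i : Fin (m + 2), i ∈ Finset.univ → i ≠ 0 →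
        (-1 : Polynomial F) ^ ((i : ℕ) + ((Fin.last (m + 1)) : ℕ)) * M i (Fin.last (m + 1)) *
          Matrix.det (M.submatrix i.succAbove (Fin.last (m + 1)).succAbove) = 0 := by
      intro i _ hi
      have hz : M i (Fin.last (m + 1)) = 0 := by
        rw [hM, Matrix.updateCol_self, hb]; norm_num
        have : ¬ (i.val = 0) := fun h => hi (Fin.ext h)
        simp [this, hi]
      rw [hz]; ring
    rw [Finset.sum_eq_single (0 : Fin (m + 2)) hterm (by simp)] at hexp
    have hM0 : M 0 (Fin.last (m + 1)) = p := by
      rw [hM, Matrix.updateCol_self, hb]; norm_num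
    set N : Matrix (Fin (m + 1)) (Fin (m + 1)) (Polynomial F) :=
      M.submatrix (Fin.succAbove 0) (Fin.succAbove (Fin.last (m + 1))) with hN
    have hNe : ∀ i j : Fin (m + 1), N i j = L i.succ j.castSucc := by
      intro i j
      rw [hN, Matrix.submatrix_apply, Fin.succAbove_zero, Fin.succAbove_last, hM,
        Matrix.updateCol_ne]
      exact Fin.ne_of_lt (Fin.castSucc_lt_last j)
    have htri : N.BlockTriangular id := by
      intro i j hij
      have hij' : (j : ℕ) < (i : ℕ) := hij
      rw [hNe, hLe]
      have h1 : C1 i.succ j.castSucc = 0 := by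
        rw [hC1]
        refine Matrix.diagonal_apply_ne' _ ?_
        intro h
        have : (j.castSucc : ℕ) = (i.succ : ℕ) := congrArg Fin.val h
        rw [Fin.coe_castSucc, Fin.val_succ] at this
        omega
      have h2 : C0 i.succ j.castSucc = 0 := by
        rw [hC0]
        rw [if_neg, if_neg, if_neg, if_neg]
        · intro h
          have : (j.castSucc : ℕ) = (i.succ : ℕ) + 1 := h
          rw [Fin.coe_castSucc, Fin.val_succ] at this
          omega
        · intro h
          have : (j.castSucc : ℕ) = (i.succ : ℕ) := congrArg Fin.val h
          rw [Fin.coe_castSucc, Fin.val_succ] at this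
          omega
        · intro h
          rw [Fin.coe_castSucc, Fin.val_succ] at h
          omega
        · rw [Fin.val_succ]; omega
      rw [h1, h2]
      simp
    have hNdiag : ∀ i : Fin (m + 1), N i i = -Polynomial.C (α (m - i.val)) := by
      intro i
      rw [hNe, hLe]
      have h1 : C1 i.succ i.castSucc = 0 := by
        rw [hC1]
        refine Matrix.diagonal_apply_ne' _ ?_
        intro h
        have : (i.castSucc : ℕ) = (i.succ : ℕ) := congrArg Fin.val h
        rw [Fin.coe_castSucc, Fin.val_succ] at this
        omega
      have h2 : C0 i.succ i.castSucc = α (m - i.val) := by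
        rw [hC0]
        rw [if_neg (by rw [Fin.val_succ]; omega),
          if_pos (by rw [Fin.coe_castSucc, Fin.val_succ])]
        congr 1
        rw [Fin.val_succ]
        omega
      rw [h1, h2]
      simp
    have hNdet : N.det = (-1 : Polynomial F) ^ (m + 1)
        * Polynomial.C (∏ k ∈ Finset.range (m + 1), α k) := by
      rw [Matrix.det_of_upperTriangular htri]
      calc ∏ i : Fin (m + 1), N i i
          = ∏ i : Fin (m + 1), -Polynomial.C (α (m - i.val)) :=
            Finset.prod_congr rfl (fun i _ => hNdiag i)
        _ = ∏ i : Fin (m + 1), (-1 : Polynomial F) * Polynomial.C (α (m - i.val)) := by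
            simp only [neg_one_mul]
        _ = (-1 : Polynomial F) ^ (m + 1) * ∏ i : Fin (m + 1), Polynomial.C (α (m - i.val)) := by
            rw [Finset.prod_mul_distrib, Finset.prod_const, Finset.card_univ, Fintype.card_fin]
        _ = (-1 : Polynomial F) ^ (m + 1) * Polynomial.C (∏ k ∈ Finset.range (m + 1), α k) := by
            congr 1
            rw [Fin.prod_univ_eq_prod_range (fun k => Polynomial.C (α (m - k)))]
            rw [show (∏ k ∈ Finset.range (m + 1), Polynomial.C (α (m - k)))
                = ∏ k ∈ Finset.range (m + 1), Polynomial.C (α (m + 1 - 1 - k)) from rfl]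
            rw [Finset.prod_range_reflect (fun k => Polynomial.C (α k)) (m + 1)]
            rw [map_prod]
    rw [← hdet, hexp, hM0]
    show (-1 : Polynomial F) ^ (((0 : Fin (m+2)) : ℕ) + ((Fin.last (m + 1)) : ℕ)) * p * N.det = _
    rw [hNdet]
    have : ((0 : Fin (m+2)) : ℕ) + ((Fin.last (m + 1)) : ℕ) = m + 1 := by
      simp [Fin.last]
    rw [this]
    have hsq : (-1 : Polynomial F) ^ (m + 1) * (-1 : Polynomial F) ^ (m + 1) = 1 := by
      rw [← pow_add, ← two_mul, pow_mul, neg_one_sq, one_pow]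
    calc (-1 : Polynomial F) ^ (m + 1) * p * ((-1) ^ (m + 1)
          * Polynomial.C (∏ k ∈ Finset.range (m + 1), α k))
        = ((-1 : Polynomial F) ^ (m + 1) * (-1) ^ (m + 1))
          * (Polynomial.C (∏ k ∈ Finset.range (m + 1), α k) * p) := by ring
      _ = Polynomial.C (∏ k ∈ Finset.range (m + 1), α k) * p := by rw [hsq, one_mul]
  rw [goal2]
  norm_num
end

section
/- Let a_0, …, a_5 ∈ ℂ and p(z) = Σ_{k=0}^5 a_k T_k(z), where T_k denotes the degree-k Chebyshev polynomial of the first kind. Define the 5×5 matrices over ℂ[z]: L(z) = [[2a_5 z + a_4, a_3 − a_5, a_2, a_1, a_0], [−1/2, z, −1/2, 0, 0], [0, −1/2, z, −1/2, 0], [0, 0, −1/2, z, −1/2], [0, 0, 0, −1, z]]; Ê(z) = [[1, a_1, a_2, a_3 − a_5, 2 z a_5 + a_4], [0, 0, −1/2, z, −1/2], [0, −1/2, z, −1/2, 0], [0, z, −1/2, 0, 0], [0, −1, 0, 0, 0]]; F̂(z) = [[0, 0, 0, 0, 1], [0, 0, 0, 1, −T_1(z)], [0, 0, 1, 0, −T_2(z)],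 [0, 1, 0, 0, −T_3(z)], [1, 0, 0, 0, −T_4(z)]]. Then Ê(z) · diag(p(z), 1, 1, 1, 1) · F̂(z) = L(z), and det Ê(z) and det F̂(z) are nonzero constants (so Ê and F̂ are unimodular); in particular the Chebyshev colleague pencil L(z) is a linearization of p. -/
open Polynomial

set_option maxHeartbeats 1000000 in
/-- For `p(z) = Σ_{k=0}^5 a_k T_k(z)` (Chebyshev basis, over ℂ), the
explicit 5×5 matrices `Ê(z)`, `F̂(z)` satisfy
`Ê(z)·diag(p,1,1,1,1)·F̂(z) = L(z)` where `L(z)` is the Chebyshev colleague pencil,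
and `det Ê`, `det F̂` are nonzero constants; in particular `L` is a linearization
of `p`. -/
theorem chebyshev_colleague_equivalence (a : ℕ → ℂ)
    (p : Polynomial ℂ)
    (hp : p = ∑ k ∈ Finset.range 6, C (a k) * Polynomial.Chebyshev.T ℂ (k : ℤ))
    (L Ehat Fhat : Matrix (Fin 5) (Fin 5) (Polynomial ℂ))
    (hL : L = !![C (2 * a 5) * X + C (a 4), C (a 3) - C (a 5), C (a 2), C (a 1), C (a 0);
                 C (-(1:ℂ)/2), X, C (-(1:ℂ)/2), 0, 0;
                 0, C (-(1:ℂ)/2), X, C (-(1:ℂ)/2), 0;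
                 0, 0, C (-(1:ℂ)/2), X, C (-(1:ℂ)/2);
                 0, 0, 0, -1, X])
    (hE : Ehat = !![1, C (a 1), C (a 2), C (a 3) - C (a 5), C (2 * a 5) * X + C (a 4);
                    0, 0, C (-(1:ℂ)/2), X, C (-(1:ℂ)/2);
                    0, C (-(1:ℂ)/2), X, C (-(1:ℂ)/2), 0;
                    0, X, C (-(1:ℂ)/2), 0, 0;
                    0, -1, 0, 0, 0])
    (hF : Fhat = !![0, 0, 0, 0, 1;
                    0, 0, 0, 1, -Polynomial.Chebyshev.T ℂ 1;
                    0, 0, 1, 0, -Polynomial.Chebyshev.T ℂ 2;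
                    0, 1, 0, 0, -Polynomial.Chebyshev.T ℂ 3;
                    1, 0, 0, 0, -Polynomial.Chebyshev.T ℂ 4]) :
    Ehat * Matrix.diagonal ![p, 1, 1, 1, 1] * Fhat = L ∧
    (∃ c : ℂ, c ≠ 0 ∧ Ehat.det = C c) ∧
    (∃ c : ℂ, c ≠ 0 ∧ Fhat.det = C c) := by
  have ht1 : Polynomial.Chebyshev.T ℂ 1 = X := Polynomial.Chebyshev.T_one ℂ
  have ht2 : Polynomial.Chebyshev.T ℂ 2 = 2*X^2 - 1 := Polynomial.Chebyshev.T_two ℂ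
  have ht3 : Polynomial.Chebyshev.T ℂ 3 = 4*X^3 - 3*X := by
    have := Polynomial.Chebyshev.T_add_two ℂ 1
    norm_num at this; rw [this, ht2]; ring
  have ht4 : Polynomial.Chebyshev.T ℂ 4 = 8*X^4 - 8*X^2 + 1 := by
    have := Polynomial.Chebyshev.T_add_two ℂ 2
    norm_num at this; rw [this, ht3, ht2]; ring
  have ht5 : Polynomial.Chebyshev.T ℂ 5 = 16*X^5 - 20*X^3 + 5*X := by
    have := Polynomial.Chebyshev.T_add_two ℂ 3
    norm_num at this; rw [this, ht4, ht3]; ring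
  have hp2 : p = C (a 0) + C (a 1)*X + C (a 2)*(2*X^2-1) + C (a 3)*(4*X^3-3*X)
      + C (a 4)*(8*X^4-8*X^2+1) + C (a 5)*(16*X^5-20*X^3+5*X) := by
    rw [hp]
    simp [Finset.sum_range_succ, ht1, ht2, ht3, ht4, ht5]
  have hC : (2:Polynomial ℂ) * C (-(1:ℂ)/2) + 1 = 0 := by
    rw [show (2:Polynomial ℂ) = C 2 from (map_ofNat C 2).symm, ← C_mul,
      show (1:Polynomial ℂ) = C 1 from rfl, ← C_add]
    norm_num
  subst hL hE hF
  refine ⟨?_, ⟨1/8, by norm_num, ?_⟩, ⟨1, one_ne_zero, ?_⟩⟩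
  · rw [← Matrix.ext_iff]
    intro i j
    fin_cases i <;> fin_cases j <;>
      simp [Matrix.mul_apply, Fin.sum_univ_five, Matrix.mul_diagonal,
        Matrix.vecMul_diagonal, Matrix.vecHead, Matrix.vecTail, map_ofNat]
    all_goals try (rw [hp2]; try rw [ht2]; try rw [ht3]; try rw [ht4]; try ring)
    all_goals try (try rw [ht2]; try rw [ht3]; try rw [ht4]; try ring)
    · linear_combination (3*(X:Polynomial ℂ)^2 - 4*X^4) * hC
    · linear_combination ((X:Polynomial ℂ) - 2*X^3) * hC
    · linear_combination (-(X:Polynomial ℂ)^2) * hC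
  · simp [Matrix.det_succ_row_zero, Fin.sum_univ_succ, map_div₀, Fin.succAbove]
    rw [mul_assoc, ← map_mul]
    norm_num [← map_neg]
    rw [← map_mul, ← map_neg]
    norm_num
  · simp [Matrix.det_succ_row_zero, Fin.sum_univ_succ, Fin.succAbove]
    norm_num
end

section
/- Let y_0, …, y_5 ∈ ℂ, let B_k^5(z) = C(5,k) z^k (1−z)^{5−k} be the degree-5 Bernstein polynomials, and let a_0, …, a_5 ∈ ℂ be the monomial coefficients determined by Σ_{k=0}^5 y_k B_k^5(z) = Σ_{k=0}^5 a_k z^k. Let L_B(z) be the 5×5 Bernstein companion pencil with first row ((1/5)y_5 z + y_4(1−z), y_3(1−z), y_2(1−z), y_1(1−z), y_0(1−z)), subdiagonal entries z−1 in positions (i,i−1) for 2 ≤ i ≤ 5, diagonal entries (2/4)z, (3/3)z, (4/2)z, (5/1)z in positions (2,2), …, (5,5), and zeros elsewhere; and let L_m(z) be the 5×5 monomial pencil with first row (z a_5 + a_4, a_3, a_2, a_1, a_0), entries −1 in positions (i,i−1) and z in positions (i,i) for 2 ≤ i ≤ 5, and zeros elsewhere. Set h_3 = −10y_3 + 20y_2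 − 15y_1 + 4y_0, h_2 = −10y_2 + 15y_1 − 6y_0, h_1 = −5y_1 + 4y_0, and define the constant matrices M = [[1, h_3, h_2, h_1, −y_0], [0, 5, 0, 0, 0], [0, −10, 10, 0, 0], [0, 10, −20, 10, 0], [0, −5, 15, −15, 5]] and W = [[5, 0, 0, 0, 0], [−10, 10, 0, 0, 0], [10, −20, 10, 0, 0], [−5, 15, −15, 5, 0], [1, −4, 6, −4, 1]]. Then M · L_m(z) = L_B(z) · W as matrices over ℂ[z], and det M ≠ 0 and det W ≠ 0; in particular the Bernstein pencil L_B(z) is strictly equivalent to the monomial pencil L_m(z). -/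
open Polynomial

set_option maxHeartbeats 1600000 in
/-- Strict equivalence of the degree-5 Bernstein companion pencil
`L_B(z)` to the monomial second companion pencil `L_m(z)`: with the explicit
constant matrices `M`, `W` one has `M·L_m(z) = L_B(z)·W` over `ℂ[z]`, and
`det M ≠ 0`, `det W ≠ 0`.  Here `a_0, …, a_5` are the monomial coefficients
determined by `Σ y_k B_k^5(z) = Σ a_k z^k`. -/
theorem bernstein_strict_equivalence_deg5 (y a : ℕ → ℂ)
    (ha : ∑ k ∈ Finset.range 6,
        C (y k) * (C ((Nat.choose 5 k : ℂ)) * X ^ k * (1 - X) ^ (5 - k)) =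
      ∑ k ∈ Finset.range 6, C (a k) * X ^ k)
    (LB Lm : Matrix (Fin 5) (Fin 5) (Polynomial ℂ))
    (hLB : LB = !![C ((1:ℂ)/5) * C (y 5) * X + C (y 4) * (1 - X),
                   C (y 3) * (1 - X), C (y 2) * (1 - X), C (y 1) * (1 - X), C (y 0) * (1 - X);
                   X - 1, C ((2:ℂ)/4) * X, 0, 0, 0;
                   0, X - 1, C ((3:ℂ)/3) * X, 0, 0;
                   0, 0, X - 1, C ((4:ℂ)/2) * X, 0;
                   0, 0, 0, X - 1, C ((5:ℂ)/1) * X])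
    (hLm : Lm = !![C (a 5) * X + C (a 4), C (a 3), C (a 2), C (a 1), C (a 0);
                   -1, X, 0, 0, 0;
                   0, -1, X, 0, 0;
                   0, 0, -1, X, 0;
                   0, 0, 0, -1, X])
    (M W : Matrix (Fin 5) (Fin 5) ℂ)
    (hM : M = !![1, -10 * y 3 + 20 * y 2 - 15 * y 1 + 4 * y 0,
                    -10 * y 2 + 15 * y 1 - 6 * y 0, -5 * y 1 + 4 * y 0, -(y 0);
                 0, 5, 0, 0, 0;
                 0, -10, 10, 0, 0;
                 0, 10, -20, 10, 0;
                 0, -5, 15, -15, 5])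
    (hW : W = !![5, 0, 0, 0, 0;
                 -10, 10, 0, 0, 0;
                 10, -20, 10, 0, 0;
                 -5, 15, -15, 5, 0;
                 1, -4, 6, -4, 1]) :
    M.map C * Lm = LB * W.map C ∧ M.det ≠ 0 ∧ W.det ≠ 0 := by
  have ev : ∀ t : ℂ, ∑ k ∈ Finset.range 6, y k * ((Nat.choose 5 k : ℂ) * t ^ k * (1 - t) ^ (5 - k))
      = ∑ k ∈ Finset.range 6, a k * t ^ k := by
    intro t
    have := congrArg (eval t) ha
    simpa [eval_finset_sum] using this
  have e0 := ev 0
  have e1 := ev 1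
  have e2 := ev 2
  have e3 := ev 3
  have e4 := ev 4
  have e5 := ev 5
  simp [Finset.sum_range_succ] at e0 e1 e2 e3 e4 e5
  norm_num [Nat.choose] at e0 e1 e2 e3 e4 e5
  have ha0 : a 0 = y 0 := by linear_combination -(e0)
  have ha1 : a 1 = -5 * y 0 + 5 * y 1 := by
    linear_combination -((-137/60 : ℂ) * e0 + 5 * e1 - 5 * e2 + (10/3 : ℂ) * e3 - (5/4 : ℂ) * e4 + (1/5 : ℂ) * e5)
  have ha2 : a 2 = 10 * y 0 - 20 * y 1 + 10 * y 2 := by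
    linear_combination -((15/8 : ℂ) * e0 - (77/12 : ℂ) * e1 + (107/12 : ℂ) * e2 - (13/2 : ℂ) * e3 + (61/24 : ℂ) * e4 - (5/12 : ℂ) * e5)
  have ha3 : a 3 = -10 * y 0 + 30 * y 1 - 30 * y 2 + 10 * y 3 := by
    linear_combination -((-17/24 : ℂ) * e0 + (71/24 : ℂ) * e1 - (59/12 : ℂ) * e2 + (49/12 : ℂ) * e3 - (41/24 : ℂ) * e4 + (7/24 : ℂ) * e5)
  have ha4 : a 4 = 5 * y 0 - 20 * y 1 + 30 * y 2 - 20 * y 3 + 5 * y 4 := by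
    linear_combination -((1/8 : ℂ) * e0 - (7/12 : ℂ) * e1 + (13/12 : ℂ) * e2 - e3 + (11/24 : ℂ) * e4 - (1/12 : ℂ) * e5)
  have ha5 : a 5 = -y 0 + 5 * y 1 - 10 * y 2 + 10 * y 3 - 5 * y 4 + y 5 := by
    linear_combination -((-1/120 : ℂ) * e0 + (1/24 : ℂ) * e1 - (1/12 : ℂ) * e2 + (1/12 : ℂ) * e3 - (1/24 : ℂ) * e4 + (1/120 : ℂ) * e5)
  refine ⟨?_, ?_, ?_⟩
  · subst hLB hLm hM hW
    refine Matrix.ext fun i j => ?_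
    refine Polynomial.funext fun x => ?_
    fin_cases i <;> fin_cases j <;>
      (simp [Matrix.mul_apply, Fin.sum_univ_five, Matrix.map_apply,
          Matrix.vecHead, Matrix.vecTail, ha0, ha1, ha2, ha3, ha4, ha5] <;> ring)
  · subst hM
    simp [Matrix.det_succ_row_zero, Fin.sum_univ_succ]
  · subst hW
    simp [Matrix.det_succ_row_zero, Fin.sum_univ_succ]
end

section
/- Let R be a commutative ring, ℓ ≥ 0, and y_0, …, y_ℓ ∈ R. Define d_k = Σ_{j=0}^k C(k,j)·y_{ℓ−j} for 0 ≤ k ≤ ℓ. Then the following identity of polynomials in R[z] holds: Σ_{k=0}^ℓ d_k B_k^ℓ(z) = Σ_{k=0}^ℓ C(ℓ,k)·y_k·z^{ℓ−k}. Equivalently (over ℂ, for every z ≠ −1), Σ_{k=0}^ℓ d_k B_k^ℓ(z) = (z+1)^ℓ · p(1/(z+1)), where p(w) = Σ_{k=0}^ℓ y_k B_k^ℓ(w); that is, the Bernstein coefficients of the reversal rev p(z) = (z+1)^ℓ p(1/(z+1)) of a grade-ℓ polynomial p given in the Bernstein basis are exactly the d_k. -/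
open Polynomial Finset

/-- Key partition-of-unity style identity: for `j ≤ ℓ`,
`∑_{k=j}^ℓ C(k,j) C(ℓ,k) X^k (1-X)^{ℓ-k} = C(ℓ,j) X^j`. -/
lemma bernstein_rev_key {R : Type*} [CommRing R] (ℓ j : ℕ) (hj : j ≤ ℓ) :
    ∑ k ∈ Finset.Ico j (ℓ + 1),
      Polynomial.C ((Nat.choose k j : R) * (Nat.choose ℓ k : R)) * Polynomial.X ^ k *
        (1 - Polynomial.X) ^ (ℓ - k)
    = Polynomial.C ((Nat.choose ℓ j : R)) * Polynomial.X ^ j := by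
  rw [Finset.sum_Ico_eq_sum_range]
  have hn : ℓ + 1 - j = (ℓ - j) + 1 := by omega
  rw [hn]
  have hterm : ∀ m ∈ Finset.range ((ℓ - j) + 1),
      Polynomial.C ((Nat.choose (j + m) j : R) * (Nat.choose ℓ (j + m) : R)) *
          Polynomial.X ^ (j + m) * (1 - Polynomial.X) ^ (ℓ - (j + m))
      = (Polynomial.C ((Nat.choose ℓ j : R)) * Polynomial.X ^ j) *
          (Polynomial.X ^ m * (1 - Polynomial.X) ^ ((ℓ - j) - m) *
            (Nat.choose (ℓ - j) m : Polynomial R)) := by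
    intro m hm
    rw [Finset.mem_range] at hm
    have hle : j + m ≤ ℓ := by omega
    have hc : (Nat.choose ℓ (j + m)) * (Nat.choose (j + m) j) =
        (Nat.choose ℓ j) * (Nat.choose (ℓ - j) m) := by
      have := Nat.choose_mul (n := ℓ) (Nat.le_add_right j m)
      simpa using this
    have hcR : (Nat.choose (j + m) j : R) * (Nat.choose ℓ (j + m) : R) =
        (Nat.choose ℓ j : R) * (Nat.choose (ℓ - j) m : R) := by
      rw [mul_comm]
      exact_mod_cast congrArg (Nat.cast (R := R)) hc
    have hsub : ℓ - (j + m) = (ℓ - j) - m := by omega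
    rw [hcR, hsub, pow_add, Polynomial.C_mul,
      show ((Nat.choose (ℓ - j) m : Polynomial R)) = Polynomial.C ((Nat.choose (ℓ - j) m : R))
        from (map_natCast _ _).symm]
    ring
  rw [Finset.sum_congr rfl hterm, ← Finset.mul_sum, ← add_pow Polynomial.X (1 - Polynomial.X) (ℓ - j)]
  simp

/-- Let `R` be a commutative ring, `ℓ ≥ 0`, `y_0, …, y_ℓ ∈ R`, and
`d_k = Σ_{j=0}^k C(k,j)·y_{ℓ−j}`.  Then in `R[z]`,
`Σ_{k=0}^ℓ d_k B_k^ℓ(z) = Σ_{k=0}^ℓ C(ℓ,k)·y_k·z^{ℓ−k}`,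
i.e. the `d_k` are the Bernstein coefficients of the reversal
`rev p(z) = (z+1)^ℓ p(1/(z+1))` of `p(w) = Σ y_k B_k^ℓ(w)`. -/
theorem bernstein_reversal_coefficients
    {R : Type*} [CommRing R] (ℓ : ℕ) (y : ℕ → R) :
    ∑ k ∈ Finset.range (ℓ + 1),
      Polynomial.C (∑ j ∈ Finset.range (k + 1), (Nat.choose k j : R) * y (ℓ - j)) *
        (Polynomial.C ((Nat.choose ℓ k : R)) * Polynomial.X ^ k *
          (1 - Polynomial.X) ^ (ℓ - k)) =
    ∑ k ∈ Finset.range (ℓ + 1),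
      Polynomial.C ((Nat.choose ℓ k : R) * y k) * Polynomial.X ^ (ℓ - k) := by
  -- expand each LHS term into a double sum
  have step1 : ∀ k ∈ Finset.range (ℓ + 1),
      Polynomial.C (∑ j ∈ Finset.range (k + 1), (Nat.choose k j : R) * y (ℓ - j)) *
        (Polynomial.C ((Nat.choose ℓ k : R)) * Polynomial.X ^ k *
          (1 - Polynomial.X) ^ (ℓ - k))
      = ∑ j ∈ Finset.range (k + 1),
          Polynomial.C (y (ℓ - j)) *
            (Polynomial.C ((Nat.choose k j : R) * (Nat.choose ℓ k : R)) * Polynomial.X ^ k *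
              (1 - Polynomial.X) ^ (ℓ - k)) := by
    intro k _
    rw [map_sum, Finset.sum_mul]
    refine Finset.sum_congr rfl fun j _ => ?_
    rw [Polynomial.C_mul, Polynomial.C_mul]
    ring
  rw [Finset.sum_congr rfl step1]
  -- swap the order of summation
  have swap : ∑ k ∈ Finset.range (ℓ + 1), ∑ j ∈ Finset.range (k + 1),
      Polynomial.C (y (ℓ - j)) *
        (Polynomial.C ((Nat.choose k j : R) * (Nat.choose ℓ k : R)) * Polynomial.X ^ k *
          (1 - Polynomial.X) ^ (ℓ - k))
      = ∑ j ∈ Finset.range (ℓ + 1), ∑ k ∈ Finset.Ico j (ℓ + 1),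
        Polynomial.C (y (ℓ - j)) *
          (Polynomial.C ((Nat.choose k j : R) * (Nat.choose ℓ k : R)) * Polynomial.X ^ k *
            (1 - Polynomial.X) ^ (ℓ - k)) := by
    simpa only [Nat.Ico_zero_eq_range] using
      (Finset.sum_Ico_Ico_comm 0 (ℓ + 1) (fun j k =>
        Polynomial.C (y (ℓ - j)) *
          (Polynomial.C ((Nat.choose k j : R) * (Nat.choose ℓ k : R)) * Polynomial.X ^ k *
            (1 - Polynomial.X) ^ (ℓ - k)))).symm
  rw [swap]
  have step2 : ∀ j ∈ Finset.range (ℓ + 1),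
      (∑ k ∈ Finset.Ico j (ℓ + 1),
        Polynomial.C (y (ℓ - j)) *
          (Polynomial.C ((Nat.choose k j : R) * (Nat.choose ℓ k : R)) * Polynomial.X ^ k *
            (1 - Polynomial.X) ^ (ℓ - k)))
      = Polynomial.C (y (ℓ - j)) * (Polynomial.C ((Nat.choose ℓ j : R)) * Polynomial.X ^ j) := by
    intro j hj
    rw [Finset.mem_range] at hj
    rw [← Finset.mul_sum, bernstein_rev_key ℓ j (by omega)]
  rw [Finset.sum_congr rfl step2]
  -- reindex the RHS by reflection k ↦ ℓ - k
  rw [← Finset.sum_range_reflect (fun k =>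
    Polynomial.C ((Nat.choose ℓ k : R) * y k) * Polynomial.X ^ (ℓ - k)) (ℓ + 1)]
  refine Finset.sum_congr rfl fun j hj => ?_
  rw [Finset.mem_range] at hj
  have h1 : ℓ + 1 - 1 - j = ℓ - j := by omega
  have h2 : ℓ - (ℓ - j) = j := by omega
  have h3 : Nat.choose ℓ (ℓ - j) = Nat.choose ℓ j := Nat.choose_symm (by omega)
  rw [h1, h2, h3, Polynomial.C_mul]
  ring
end

section
/- Let F be a field, ℓ ≥ 0, and let τ_0, …, τ_ℓ ∈ F be distinct. Let β_k = ∏_{j≠k} 1/(τ_k − τ_j) be the barycentric weights and w_k(z) = β_k ∏_{j≠k} (z − τ_j) the Lagrange basis polynomials. Let p_0, …, p_ℓ ∈ F and p(z) = Σ_{k=0}^ℓ p_k w_k(z). Define the (ℓ+2)×(ℓ+2) matrix L(z) over F[z] (rows and columns indexed 0, …, ℓ+1): L_{0,0} = 0; L_{0,1+i} = −p_{ℓ−i} for 0 ≤ i ≤ ℓ; L_{1+i,0} = β_{ℓ−i} for 0 ≤ i ≤ ℓ; L_{1+i,1+i} = z − τ_{ℓ−i} for 0 ≤ i ≤ ℓ;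 all other entries 0. Then det L(z) = p(z). -/
open Finset Matrix Polynomial

/-- Determinant of the "shifted" matrix: first row `b`, subdiagonal `d`. -/
lemma shift_det {R : Type*} [CommRing R] (n : ℕ) (b d : ℕ → R) :
    Matrix.det (Matrix.of fun i j : Fin (n + 1) =>
      if i.val = 0 then b j.val else if j.val + 1 = i.val then d j.val else 0) =
    (-1) ^ n * (b n * ∏ i ∈ Finset.range n, d i) := by
  set M : Matrix (Fin (n+1)) (Fin (n+1)) R := Matrix.of fun i j : Fin (n + 1) =>
      if i.val = 0 then b j.val else if j.val + 1 = i.val then d j.val else 0 with hM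
  have h := Matrix.det_permute (finRotate (n+1)) M
  set N : Matrix (Fin (n+1)) (Fin (n+1)) R := M.submatrix (finRotate (n+1)) id with hN
  have hval : ∀ i : Fin (n+1), (finRotate (n+1) i).val = if i.val = n then 0 else i.val + 1 := by
    intro i
    rw [finRotate_succ_apply, Fin.val_add_one]
    rcases eq_or_ne i (Fin.last n) with hi | hi
    · subst hi; simp
    · rw [if_neg hi, if_neg (show ¬(i : ℕ) = n from fun h => hi (Fin.ext h))]
  have htri : N.BlockTriangular OrderDual.toDual := by
    intro i j hij
    have hij' : (i : ℕ) < (j : ℕ) := hij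
    have hin : i.val ≠ n := by omega
    have hv : (finRotate (n+1) i).val = i.val + 1 := by rw [hval i, if_neg hin]
    show M (finRotate (n+1) i) (id j) = 0
    simp only [hM, Matrix.of_apply, hv, id]
    rw [if_neg (by omega), if_neg (by omega)]
  have hdet : N.det = (∏ i ∈ Finset.range n, d i) * b n := by
    rw [Matrix.det_of_lowerTriangular N htri]
    rw [Fin.prod_univ_castSucc]
    congr 1
    · rw [← Fin.prod_univ_eq_prod_range]
      apply Finset.prod_congr rfl
      intro i _
      have hvc : (i.castSucc : Fin (n+1)).val = i.val := rfl
      have hv : (finRotate (n+1) i.castSucc).val = i.val + 1 := by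
        rw [hval, hvc, if_neg (by omega)]
      show M (finRotate (n+1) i.castSucc) (id i.castSucc) = d i.val
      simp only [hM, Matrix.of_apply, hv, id, hvc]
      rw [if_neg (by omega)]
      simp
    · have hv : (finRotate (n+1) (Fin.last n)).val = 0 := by
        rw [hval]; simp
      show M (finRotate (n+1) (Fin.last n)) (id (Fin.last n)) = b n
      simp only [hM, Matrix.of_apply, hv, id, Fin.val_last]
      simp
  have hsign : ((Equiv.Perm.sign (finRotate (n+1)) : ℤ) : R) = (-1) ^ n := by
    rw [sign_finRotate]; push_cast; ring
  rw [hdet, hsign] at h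
  have := congrArg (fun x => ((-1 : R) ^ n) * x) h
  have h2 : ((-1 : R)) ^ n * (-1) ^ n = 1 := by
    rw [← pow_add, ← two_mul, pow_mul]; norm_num
  rw [← mul_assoc ((-1:R)^n) ((-1:R)^n), h2, one_mul] at this
  rw [← this]; ring

/-- Determinant of an arrowhead matrix. -/
lemma arrow_det {R : Type*} [CommRing R] (n : ℕ) (a : R) (b c d : ℕ → R) :
    Matrix.det (Matrix.of fun r s : Fin (n + 1) =>
      if r.val = 0 then (if s.val = 0 then a else b (s.val - 1))
      else if s.val = 0 then c (r.val - 1)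
      else if r = s then d (r.val - 1) else 0) =
    a * ∏ i ∈ Finset.range n, d i -
      ∑ i ∈ Finset.range n, b i * c i * ∏ j ∈ (Finset.range n).erase i, d j := by
  induction n with
  | zero => simp [Matrix.det_fin_one]
  | succ n ih =>
    set A : Matrix (Fin (n+2)) (Fin (n+2)) R := Matrix.of fun r s : Fin (n + 2) =>
      if r.val = 0 then (if s.val = 0 then a else b (s.val - 1))
      else if s.val = 0 then c (r.val - 1)
      else if r = s then d (r.val - 1) else 0 with hA
    rw [Matrix.det_succ_row A (Fin.last (n+1))]
    have hlastval : (Fin.last (n+1)).val = n + 1 := rfl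
    have h0l : (0 : Fin (n+2)) ≠ Fin.last (n+1) := by
      intro h
      have h2 := congrArg Fin.val h
      simp [Fin.val_last] at h2
    have hzero : ∀ j : Fin (n+2), j ≠ 0 → j ≠ Fin.last (n+1) →
        (-1 : R) ^ ((Fin.last (n+1) : Fin (n+2)).val + j.val) * A (Fin.last (n+1)) j *
          (A.submatrix (Fin.last (n+1)).succAbove j.succAbove).det = 0 := by
      intro j hj0 hjl
      have h1 : A (Fin.last (n+1)) j = 0 := by
        simp only [hA, Matrix.of_apply, hlastval]
        rw [if_neg (by omega), if_neg (fun h => hj0 (Fin.ext (by simp [h]))),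
          if_neg (fun h => hjl h.symm)]
      rw [h1]; ring
    rw [Finset.sum_eq_add_of_mem (0 : Fin (n+2)) (Fin.last (n+1)) (Finset.mem_univ _)
      (Finset.mem_univ _) h0l (fun k _ hk => hzero k hk.1 hk.2)]
    -- first minor: shift matrix
    have hm1 : (A.submatrix (Fin.last (n+1)).succAbove (0 : Fin (n+2)).succAbove) =
        Matrix.of (fun i j : Fin (n + 1) =>
          if i.val = 0 then b j.val else if j.val + 1 = i.val then d j.val else 0) := by
      ext i j
      rw [Matrix.submatrix_apply, Fin.succAbove_last, Fin.succAbove_zero]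
      have hic : (i.castSucc : Fin (n+2)).val = i.val := rfl
      have hjs : ((j.succ : Fin (n+2)) : ℕ) = j.val + 1 := rfl
      simp only [hA, Matrix.of_apply, hic, hjs]
      by_cases hi0 : i.val = 0
      · simp [hi0]
      · rw [if_neg hi0, if_neg (by omega), if_neg hi0]
        by_cases heq : j.val + 1 = i.val
        · rw [if_pos (Fin.ext (show i.val = j.val + 1 by omega) : i.castSucc = j.succ),
            if_pos heq]
          congr 1; omega
        · rw [if_neg (fun h => heq (by
            have h2 := congrArg Fin.val h
            rw [hic, hjs] at h2
            omega)), if_neg heq]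
    -- second minor: smaller arrowhead
    have hm2 : (A.submatrix (Fin.last (n+1)).succAbove (Fin.last (n+1)).succAbove) =
        Matrix.of (fun r s : Fin (n + 1) =>
          if r.val = 0 then (if s.val = 0 then a else b (s.val - 1))
          else if s.val = 0 then c (r.val - 1)
          else if r = s then d (r.val - 1) else 0) := by
      ext i j
      rw [Matrix.submatrix_apply, Fin.succAbove_last]
      have hic : (i.castSucc : Fin (n+2)).val = i.val := rfl
      have hjc : (j.castSucc : Fin (n+2)).val = j.val := rfl
      simp only [hA, Matrix.of_apply, hic, hjc, Fin.castSucc_inj]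
    rw [hm1, hm2, shift_det, ih]
    -- entries of last row
    have hA0 : A (Fin.last (n+1)) 0 = c n := by
      simp only [hA, Matrix.of_apply, hlastval, Fin.val_zero]
      simp
    have hAl : A (Fin.last (n+1)) (Fin.last (n+1)) = d n := by
      simp only [hA, Matrix.of_apply, hlastval]
      simp
    rw [hA0, hAl]
    -- rewrite range (n+1) sums/products
    rw [Finset.prod_range_succ, Finset.sum_range_succ]
    have herase : ∀ i ∈ Finset.range n,
        (∏ j ∈ (Finset.range (n+1)).erase i, d j) =
          d n * ∏ j ∈ (Finset.range n).erase i, d j := by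
      intro i hi
      have hin : i ≠ n := by have := Finset.mem_range.mp hi; omega
      rw [Finset.range_add_one, Finset.erase_insert_of_ne (Ne.symm hin),
        Finset.prod_insert (by simp)]
    have heq : ∑ i ∈ Finset.range n, b i * c i * ∏ j ∈ (Finset.range (n+1)).erase i, d j =
        d n * ∑ i ∈ Finset.range n, b i * c i * ∏ j ∈ (Finset.range n).erase i, d j := by
      rw [Finset.mul_sum]
      apply Finset.sum_congr rfl
      intro i hi
      rw [herase i hi]; ring
    rw [heq]
    have hnn : (Finset.range (n+1)).erase n = Finset.range n := by
      rw [Finset.range_add_one, Finset.erase_insert (by simp)]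
    rw [hnn, hlastval]
    have hval0 : ((0 : Fin (n+2)) : ℕ) = 0 := rfl
    rw [hval0]
    ring_nf
    rw [show ((-1 : R) ^ (n * 2)) = 1 by rw [mul_comm, pow_mul]; norm_num]
    ring

/-- For distinct nodes `τ_0, …, τ_ℓ` in a field `F`, barycentric weights
`β_k = ∏_{j≠k} 1/(τ_k − τ_j)`, Lagrange basis polynomials
`w_k(z) = β_k ∏_{j≠k}(z − τ_j)`, values `p_0, …, p_ℓ` and `p(z) = Σ p_k w_k(z)`,
the `(ℓ+2)×(ℓ+2)` Lagrange companion pencil `L(z)` (upward arrowhead form) with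
`L_{0,0}=0`, `L_{0,1+i} = −p_{ℓ−i}`, `L_{1+i,0} = β_{ℓ−i}`, `L_{1+i,1+i} = z−τ_{ℓ−i}`
and zeros elsewhere satisfies `det L(z) = p(z)`. -/
theorem lagrange_companion_pencil_det
    {F : Type*} [Field F] (ℓ : ℕ) (τ : ℕ → F)
    (hτ : ∀ j ≤ ℓ, ∀ k ≤ ℓ, j ≠ k → τ j ≠ τ k)
    (β : ℕ → F)
    (hβ : ∀ k ≤ ℓ, β k = ∏ j ∈ (Finset.range (ℓ + 1)).erase k, (τ k - τ j)⁻¹)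
    (p : ℕ → F) :
    Matrix.det (Matrix.of (fun r c : Fin (ℓ + 2) =>
      if r.val = 0 then
        (if c.val = 0 then 0 else -Polynomial.C (p (ℓ - (c.val - 1))))
      else if c.val = 0 then Polynomial.C (β (ℓ - (r.val - 1)))
      else if r = c then Polynomial.X - Polynomial.C (τ (ℓ - (r.val - 1)))
      else 0)) =
    ∑ k ∈ Finset.range (ℓ + 1),
      Polynomial.C (p k * β k) *
        ∏ j ∈ (Finset.range (ℓ + 1)).erase k,
          (Polynomial.X - Polynomial.C (τ j)) := by
  refine Eq.trans (arrow_det (ℓ + 1) (0 : Polynomial F)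
      (fun i => -Polynomial.C (p (ℓ - i))) (fun i => Polynomial.C (β (ℓ - i)))
      (fun i => Polynomial.X - Polynomial.C (τ (ℓ - i)))) ?_
  rw [zero_mul, zero_sub, ← Finset.sum_neg_distrib]
  refine Finset.sum_nbij' (fun i => ℓ - i) (fun k => ℓ - k) ?_ ?_ ?_ ?_ ?_
  · intro x hx; simp only [Finset.mem_range] at hx ⊢
    show ℓ - x < ℓ + 1; omega
  · intro x hx; simp only [Finset.mem_range] at hx ⊢
    show ℓ - x < ℓ + 1; omega
  · intro x hx; simp only [Finset.mem_range] at hx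
    show ℓ - (ℓ - x) = x; omega
  · intro x hx; simp only [Finset.mem_range] at hx
    show ℓ - (ℓ - x) = x; omega
  · intro a ha
    have ha' : a ≤ ℓ := by
      have := Finset.mem_range.mp ha; omega
    have hprod : ∏ j ∈ (Finset.range (ℓ+1)).erase a,
        (Polynomial.X - Polynomial.C (τ (ℓ - j))) =
        ∏ j ∈ (Finset.range (ℓ+1)).erase (ℓ - a), (Polynomial.X - Polynomial.C (τ j)) := by
      refine Finset.prod_nbij' (fun j => ℓ - j) (fun j => ℓ - j) ?_ ?_ ?_ ?_ ?_
      · intro x hx; rw [Finset.mem_erase, Finset.mem_range] at hx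
        rw [Finset.mem_erase, Finset.mem_range]
        constructor
        · show ℓ - x ≠ ℓ - a; omega
        · show ℓ - x < ℓ + 1; omega
      · intro x hx; rw [Finset.mem_erase, Finset.mem_range] at hx
        rw [Finset.mem_erase, Finset.mem_range]
        constructor
        · show ℓ - x ≠ a; omega
        · show ℓ - x < ℓ + 1; omega
      · intro x hx; rw [Finset.mem_erase, Finset.mem_range] at hx
        show ℓ - (ℓ - x) = x; omega
      · intro x hx; rw [Finset.mem_erase, Finset.mem_range] at hx
        show ℓ - (ℓ - x) = x; omega
      · intro x hx; rfl
    rw [hprod, Polynomial.C_mul]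
    ring
end

section
/- Let F be a field, n ≥ 1, ℓ ≥ 1, and let τ_0, …, τ_ℓ ∈ F be distinct with barycentric weights β_k = ∏_{j≠k} 1/(τ_k − τ_j) and Lagrange basis polynomials w_k(z) = β_k ∏_{j≠k}(z − τ_j). Let P_0, …, P_ℓ be invertible n×n matrices over F and P(z) = Σ_{k=0}^ℓ P_k w_k(z). Let L(z) be the n(ℓ+2) × n(ℓ+2) block pencil with block (0,0) = 0, blocks (0,1+i) = −P_{ℓ−i}, blocks (1+i,0) = β_{ℓ−i} I_n, blocks (1+i,1+i) = (z−τ_{ℓ−i}) I_n for 0 ≤ i ≤ ℓ, and other blocks 0. Then there exist unimodular matrix polynomials E(z), F(z) over F[z] of size n(ℓ+2) such that E(z)·L(z)·F(z) = diag(P(z), I_n, …, I_n) (with ℓ+1 identity blocks); that is, L(z) is a linearization of P(z). -/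
open Polynomial Matrix Finset
open scoped Kronecker

section Aux
variable {F : Type*} [Field F]


theorem lag_sum_wk (ℓ : ℕ) (τ : ℕ → F) (hτ : ∀ j ≤ ℓ, ∀ k ≤ ℓ, j ≠ k → τ j ≠ τ k)
    (β : ℕ → F)
    (hβ : ∀ k ≤ ℓ, β k = ∏ j ∈ (Finset.range (ℓ + 1)).erase k, (τ k - τ j)⁻¹) :
    ∑ k ∈ Finset.range (ℓ + 1),
      C (β k) * ∏ j ∈ (Finset.range (ℓ + 1)).erase k, (X - C (τ j)) = 1 := by
  have hinj : Set.InjOn τ (Finset.range (ℓ + 1)) := by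
    intro a ha b hb hab
    by_contra hne
    exact hτ a (by simpa [Nat.lt_succ_iff] using ha) b (by simpa [Nat.lt_succ_iff] using hb) hne hab
  have hsum := Lagrange.sum_basis hinj ⟨0, by simp⟩
  rw [← hsum]
  refine Finset.sum_congr rfl fun k hk => ?_
  unfold Lagrange.basis Lagrange.basisDivisor
  rw [Finset.prod_mul_distrib, ← map_prod (Polynomial.C : F →+* F[X]),
    ← hβ k (by simpa [Nat.lt_succ_iff] using hk)]

theorem lag_d_mul_m (ℓ : ℕ) (τ : ℕ → F) (k : ℕ) (hk : k ∈ Finset.range (ℓ + 1)) :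
    (X - C (τ k)) * ∏ j ∈ (Finset.range (ℓ + 1)).erase k, (X - C (τ j)) =
      ∏ j ∈ Finset.range (ℓ + 1), (X - C (τ j)) :=
  Finset.mul_prod_erase _ (fun j => X - C (τ j)) hk

theorem lag_det_S2 (ℓ : ℕ) (τ : ℕ → F) (hτ : ∀ j ≤ ℓ, ∀ k ≤ ℓ, j ≠ k → τ j ≠ τ k)
    (β : ℕ → F)
    (hβ : ∀ k ≤ ℓ, β k = ∏ j ∈ (Finset.range (ℓ + 1)).erase k, (τ k - τ j)⁻¹) :
    (Matrix.of fun r c : Fin (ℓ + 2) =>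
      if r.val = 0 then (if c.val = 0 then (1 : F[X]) else 0)
      else if c.val = 0 then 0
      else (if r = c then X - C (τ (ℓ - (r.val - 1))) else 0)
        + (1 - ∏ j ∈ Finset.range (ℓ + 1), (X - C (τ j))) * C (β (ℓ - (r.val - 1)))).det
      = 1 := by
  set M : F[X] := ∏ j ∈ Finset.range (ℓ + 1), (X - C (τ j)) with hM
  set φ := algebraMap F[X] (RatFunc F) with hφ
  have hinj : Function.Injective φ := IsFractionRing.injective _ _
  set S2 : Matrix (Fin (ℓ + 2)) (Fin (ℓ + 2)) F[X] := Matrix.of fun r c : Fin (ℓ + 2) =>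
      if r.val = 0 then (if c.val = 0 then (1 : F[X]) else 0)
      else if c.val = 0 then 0
      else (if r = c then X - C (τ (ℓ - (r.val - 1))) else 0)
        + (1 - M) * C (β (ℓ - (r.val - 1))) with hS2
  apply hinj
  rw [_root_.map_one, RingHom.map_det, RingHom.mapMatrix_apply]
  -- factor S2.map φ
  set dd : Fin (ℓ + 2) → RatFunc F := fun r =>
    if r.val = 0 then 1 else φ (X - C (τ (ℓ - (r.val - 1)))) with hdd
  set u : Fin (ℓ + 2) → RatFunc F := fun r =>
    if r.val = 0 then 0
    else φ ((1 - M) * C (β (ℓ - (r.val - 1)))) / φ (X - C (τ (ℓ - (r.val - 1)))) with hu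
  set v : Fin (ℓ + 2) → RatFunc F := fun c => if c.val = 0 then 0 else 1 with hv
  have hdne : ∀ k : ℕ, φ (X - C (τ k)) ≠ 0 := fun k => by
    rw [map_ne_zero_iff φ hinj]
    exact Polynomial.X_sub_C_ne_zero _
  have key : ∀ a b : RatFunc F, a ≠ 0 → a * (1 + b / a) = a + b := fun a b ha => by
    field_simp
  have key2 : ∀ a b : RatFunc F, a ≠ 0 → a * (0 + b / a) = b := fun a b ha => by
    field_simp
    ring
  have hfac : S2.map φ = Matrix.diagonal dd * (1 + Matrix.replicateCol Unit u * Matrix.replicateRow Unit v) := by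
    ext r c
    rw [Matrix.diagonal_mul]
    have hcr : (Matrix.replicateCol Unit u * Matrix.replicateRow Unit v) r c = u r * v c := by
      simp [Matrix.mul_apply]
    simp only [Matrix.map_apply, Matrix.add_apply, hcr, Matrix.one_apply]
    by_cases hr : r.val = 0
    · by_cases hc : c.val = 0
      · have : r = c := Fin.ext (by omega)
        simp [hS2, hr, hc, hdd, hu, this, (Fin.ext hr : r = (0 : Fin (ℓ + 2))), (Fin.ext hc : c = (0 : Fin (ℓ + 2)))]
      · have : ¬ r = c := fun h => hc (h ▸ hr)
        simp [hS2, hr, hc, hdd, hu, hv, this, (Fin.ext hr : r = (0 : Fin (ℓ + 2))), (fun h => hc (congrArg Fin.val h) : ¬ c = (0 : Fin (ℓ + 2)))]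
        simp [Fin.ext_iff, hc, eq_comm (a := (0 : ℕ))]
    · by_cases hc : c.val = 0
      · have : ¬ r = c := fun h => hr (h ▸ hc)
        simp [hS2, hr, hc, hdd, hu, hv, this, (Fin.ext hc : c = (0 : Fin (ℓ + 2)))]
        simp [Fin.ext_iff, hr]
      · simp only [hS2, Matrix.of_apply, hr, hc, if_false, if_neg hr, if_neg hc, hdd, hu, hv]
        rw [map_add]
        by_cases hrc : r = c
        · simp only [hrc, if_pos rfl, if_true]
          rw [mul_one]
          exact (key _ _ (hdne _)).symm
        · simp only [if_neg hrc]
          rw [map_zero, zero_add]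
          rw [mul_one]
          exact (key2 _ _ (hdne _)).symm
  rw [hfac, det_mul, det_diagonal, det_one_add_replicateCol_mul_replicateRow]
  have hmem : ∀ i : Fin (ℓ + 1), ℓ - i.val ∈ Finset.range (ℓ + 1) := fun i => by
    simp only [Finset.mem_range]; omega
  have hrefl : ∀ j, j ∈ Finset.range (ℓ + 1) → ℓ - (ℓ - j) = j := fun j hj =>
    Nat.sub_sub_self (Nat.lt_succ_iff.mp (Finset.mem_range.mp hj))
  have hprod : (∏ r, dd r) = φ M := by
    rw [Fin.prod_univ_succ]
    have h0 : dd 0 = 1 := by simp [hdd]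
    have hsucc : ∀ i : Fin (ℓ + 1), dd i.succ = φ (X - C (τ (ℓ - i.val))) := fun i => by
      simp [hdd, Fin.val_succ]
    rw [h0, one_mul]
    calc (∏ i : Fin (ℓ + 1), dd i.succ)
        = ∏ i : Fin (ℓ + 1), φ (X - C (τ (ℓ - i.val))) :=
          Finset.prod_congr rfl fun i _ => hsucc i
      _ = ∏ i ∈ Finset.range (ℓ + 1), φ (X - C (τ (ℓ - i))) :=
          Fin.prod_univ_eq_prod_range (fun i => φ (X - C (τ (ℓ - i)))) (ℓ + 1)
      _ = ∏ i ∈ Finset.range (ℓ + 1), φ (X - C (τ i)) := by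
          rw [← Finset.prod_range_reflect]
          exact Finset.prod_congr rfl fun j hj => by rw [Nat.add_sub_cancel, hrefl j hj]
      _ = φ M := by rw [hM, map_prod]
  have hdot : v ⬝ᵥ u = ∑ i : Fin (ℓ + 1), u i.succ := by
    rw [dotProduct, Fin.sum_univ_succ]
    have h0 : v 0 * u 0 = 0 := by simp [hv, hu]
    rw [h0, zero_add]
    exact Finset.sum_congr rfl fun i _ => by simp [hv, Fin.val_succ]
  have hterm : ∀ i : Fin (ℓ + 1), φ M * u i.succ =
      φ ((1 - M) * (C (β (ℓ - i.val)) *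
        ∏ j ∈ (Finset.range (ℓ + 1)).erase (ℓ - i.val), (X - C (τ j)))) := by
    intro i
    have hMsplit : φ M = φ (X - C (τ (ℓ - i.val))) *
        φ (∏ j ∈ (Finset.range (ℓ + 1)).erase (ℓ - i.val), (X - C (τ j))) := by
      rw [← _root_.map_mul, lag_d_mul_m ℓ τ (ℓ - i.val) (hmem i), hM]
    have husucc : u i.succ = φ ((1 - M) * C (β (ℓ - i.val))) /
        φ (X - C (τ (ℓ - i.val))) := by
      simp [hu, Fin.val_succ]
    rw [husucc, hMsplit, mul_comm (φ (X - C (τ (ℓ - i.val)))), mul_assoc,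
      mul_div_cancel₀ _ (hdne _), ← _root_.map_mul]
    congr 1
    ring
  rw [hprod, hdot, mul_add, mul_one, Finset.mul_sum]
  have hsum2 : ∑ i : Fin (ℓ + 1), φ M * u i.succ = φ (1 - M) := by
    calc (∑ i : Fin (ℓ + 1), φ M * u i.succ)
        = ∑ i : Fin (ℓ + 1), φ ((1 - M) * (C (β (ℓ - i.val)) *
            ∏ j ∈ (Finset.range (ℓ + 1)).erase (ℓ - i.val), (X - C (τ j)))) :=
          Finset.sum_congr rfl fun i _ => hterm i
      _ = ∑ k ∈ Finset.range (ℓ + 1), φ ((1 - M) * (C (β (ℓ - k)) *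
            ∏ j ∈ (Finset.range (ℓ + 1)).erase (ℓ - k), (X - C (τ j)))) :=
          Fin.sum_univ_eq_sum_range (fun k => φ ((1 - M) * (C (β (ℓ - k)) *
            ∏ j ∈ (Finset.range (ℓ + 1)).erase (ℓ - k), (X - C (τ j))))) (ℓ + 1)
      _ = ∑ k ∈ Finset.range (ℓ + 1), φ ((1 - M) * (C (β k) *
            ∏ j ∈ (Finset.range (ℓ + 1)).erase k, (X - C (τ j)))) := by
          rw [← Finset.sum_range_reflect]
          exact Finset.sum_congr rfl fun j hj => by rw [Nat.add_sub_cancel, hrefl j hj]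
      _ = φ ((1 - M) * ∑ k ∈ Finset.range (ℓ + 1), C (β k) *
            ∏ j ∈ (Finset.range (ℓ + 1)).erase k, (X - C (τ j))) := by
          rw [_root_.map_mul, _root_.map_sum, Finset.mul_sum]
          exact Finset.sum_congr rfl fun k _ => by rw [_root_.map_mul]
      _ = φ (1 - M) := by rw [lag_sum_wk ℓ τ hτ β hβ, mul_one]
  rw [hsum2, ← _root_.map_add]
  have : M + (1 - M) = 1 := by ring
  rw [this, _root_.map_one]

theorem lag_sum_fin (ℓ : ℕ) (τ : ℕ → F) (hτ : ∀ j ≤ ℓ, ∀ k ≤ ℓ, j ≠ k → τ j ≠ τ k)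
    (β : ℕ → F)
    (hβ : ∀ k ≤ ℓ, β k = ∏ j ∈ (Finset.range (ℓ + 1)).erase k, (τ k - τ j)⁻¹)
    (hw : ∑ k ∈ Finset.range (ℓ + 1),
      C (β k) * ∏ j ∈ (Finset.range (ℓ + 1)).erase k, (X - C (τ j)) = 1) :
    ∑ i : Fin (ℓ + 1),
      C (β (ℓ - i.val)) * ∏ j ∈ (Finset.range (ℓ + 1)).erase (ℓ - i.val), (X - C (τ j)) = 1 := by
  rw [Fin.sum_univ_eq_sum_range
    (fun k => C (β (ℓ - k)) * ∏ j ∈ (Finset.range (ℓ + 1)).erase (ℓ - k), (X - C (τ j))) (ℓ + 1),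
    ← hw, ← Finset.sum_range_reflect]
  exact Finset.sum_congr rfl fun j hj => by
    rw [Nat.add_sub_cancel, Nat.sub_sub_self (Nat.lt_succ_iff.mp (Finset.mem_range.mp hj))]

theorem lag_S1_mul_S1inv (ℓ : ℕ) (Mp : F[X]) (w : ℕ → F[X])
    (hw : ∑ i : Fin (ℓ + 1), w (ℓ - i.val) = 1) :
    (Matrix.of fun r c : Fin (ℓ + 2) =>
      if r.val = 0 then (if c.val = 0 then Mp else 1 - Mp)
      else if c.val = 0 then -(w (ℓ - (r.val - 1)))
      else if r = c then 1 else 0) *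
    (Matrix.of fun r c : Fin (ℓ + 2) =>
      if r.val = 0 then (if c.val = 0 then 1 else Mp - 1)
      else if c.val = 0 then w (ℓ - (r.val - 1))
      else (if r = c then 1 else 0) + (Mp - 1) * w (ℓ - (r.val - 1))) = 1 := by
  refine Matrix.ext fun r c => ?_
  rw [Matrix.mul_apply, Fin.sum_univ_succ]
  by_cases hr : r = 0
  · by_cases hc : c = 0
    · subst hr; subst hc
      have hhead : ∀ x : F[X], (Matrix.of fun r c : Fin (ℓ + 2) =>
          if r.val = 0 then (if c.val = 0 then Mp else 1 - Mp)
          else if c.val = 0 then -(w (ℓ - (r.val - 1)))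
          else if r = c then 1 else 0) = (Matrix.of fun r c : Fin (ℓ + 2) =>
          if r.val = 0 then (if c.val = 0 then Mp else 1 - Mp)
          else if c.val = 0 then -(w (ℓ - (r.val - 1)))
          else if r = c then 1 else 0) := fun _ => rfl
      have hs : ∑ i : Fin (ℓ + 1),
          ((Matrix.of fun r c : Fin (ℓ + 2) =>
            if r.val = 0 then (if c.val = 0 then Mp else 1 - Mp)
            else if c.val = 0 then -(w (ℓ - (r.val - 1)))
            else if r = c then 1 else 0) 0 i.succ *
           (Matrix.of fun r c : Fin (ℓ + 2) =>
            if r.val = 0 then (if c.val = 0 then 1 else Mp - 1)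
            else if c.val = 0 then w (ℓ - (r.val - 1))
            else (if r = c then 1 else 0) + (Mp - 1) * w (ℓ - (r.val - 1))) i.succ 0)
          = ∑ i : Fin (ℓ + 1), (1 - Mp) * w (ℓ - i.val) :=
        Finset.sum_congr rfl fun i _ => by
          simp [Fin.val_succ]
      rw [hs, ← Finset.mul_sum, hw]
      simp [Matrix.one_apply]
    · obtain ⟨j, rfl⟩ := Fin.eq_succ_of_ne_zero hc
      subst hr
      have hs : ∑ i : Fin (ℓ + 1),
          ((Matrix.of fun r c : Fin (ℓ + 2) =>
            if r.val = 0 then (if c.val = 0 then Mp else 1 - Mp)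
            else if c.val = 0 then -(w (ℓ - (r.val - 1)))
            else if r = c then 1 else 0) 0 i.succ *
           (Matrix.of fun r c : Fin (ℓ + 2) =>
            if r.val = 0 then (if c.val = 0 then 1 else Mp - 1)
            else if c.val = 0 then w (ℓ - (r.val - 1))
            else (if r = c then 1 else 0) + (Mp - 1) * w (ℓ - (r.val - 1))) i.succ j.succ)
          = ∑ i : Fin (ℓ + 1),
            ((1 - Mp) * (if i = j then 1 else 0) + ((1 - Mp) * (Mp - 1)) * w (ℓ - i.val)) :=
        Finset.sum_congr rfl fun i _ => by
          simp only [Matrix.of_apply, Fin.val_succ, Fin.val_zero, Nat.succ_ne_zero,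
            if_false, if_true, Nat.add_sub_cancel, Fin.succ_inj, reduceIte]
          ring
      rw [hs, Finset.sum_add_distrib, ← Finset.mul_sum, ← Finset.mul_sum, hw,
        Finset.sum_ite_eq' Finset.univ j (fun _ => (1 : F[X]))]
      simp [Matrix.one_apply, (Fin.succ_ne_zero j).symm]
      ring
  · obtain ⟨rj, rfl⟩ := Fin.eq_succ_of_ne_zero hr
    by_cases hc : c = 0
    · subst hc
      have hs : ∑ i : Fin (ℓ + 1),
          ((Matrix.of fun r c : Fin (ℓ + 2) =>
            if r.val = 0 then (if c.val = 0 then Mp else 1 - Mp)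
            else if c.val = 0 then -(w (ℓ - (r.val - 1)))
            else if r = c then 1 else 0) rj.succ i.succ *
           (Matrix.of fun r c : Fin (ℓ + 2) =>
            if r.val = 0 then (if c.val = 0 then 1 else Mp - 1)
            else if c.val = 0 then w (ℓ - (r.val - 1))
            else (if r = c then 1 else 0) + (Mp - 1) * w (ℓ - (r.val - 1))) i.succ 0)
          = ∑ i : Fin (ℓ + 1), (if rj = i then w (ℓ - i.val) else 0) :=
        Finset.sum_congr rfl fun i _ => by
          simp only [Matrix.of_apply, Fin.val_succ, Fin.val_zero, Nat.succ_ne_zero,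
            if_false, if_true, Nat.add_sub_cancel, Fin.succ_inj, reduceIte, ite_mul,
            one_mul, zero_mul]
      rw [hs, Finset.sum_ite_eq Finset.univ rj (fun i => w (ℓ - i.val))]
      simp [Matrix.one_apply, Fin.succ_ne_zero rj, Fin.val_succ]
    · obtain ⟨j, rfl⟩ := Fin.eq_succ_of_ne_zero hc
      have hs : ∑ i : Fin (ℓ + 1),
          ((Matrix.of fun r c : Fin (ℓ + 2) =>
            if r.val = 0 then (if c.val = 0 then Mp else 1 - Mp)
            else if c.val = 0 then -(w (ℓ - (r.val - 1)))
            else if r = c then 1 else 0) rj.succ i.succ *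
           (Matrix.of fun r c : Fin (ℓ + 2) =>
            if r.val = 0 then (if c.val = 0 then 1 else Mp - 1)
            else if c.val = 0 then w (ℓ - (r.val - 1))
            else (if r = c then 1 else 0) + (Mp - 1) * w (ℓ - (r.val - 1))) i.succ j.succ)
          = ∑ i : Fin (ℓ + 1), (if rj = i then
              ((if i = j then 1 else 0) + (Mp - 1) * w (ℓ - i.val)) else 0) :=
        Finset.sum_congr rfl fun i _ => by
          simp only [Matrix.of_apply, Fin.val_succ, Fin.val_zero, Nat.succ_ne_zero,
            if_false, if_true, Nat.add_sub_cancel, Fin.succ_inj, reduceIte, ite_mul,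
            one_mul, zero_mul]
      rw [hs, Finset.sum_ite_eq Finset.univ rj
        (fun i => (if i = j then (1:F[X]) else 0) + (Mp - 1) * w (ℓ - i.val))]
      have hhead : (Matrix.of fun r c : Fin (ℓ + 2) =>
            if r.val = 0 then (if c.val = 0 then Mp else 1 - Mp)
            else if c.val = 0 then -(w (ℓ - (r.val - 1)))
            else if r = c then 1 else 0) rj.succ 0 *
          (Matrix.of fun r c : Fin (ℓ + 2) =>
            if r.val = 0 then (if c.val = 0 then 1 else Mp - 1)
            else if c.val = 0 then w (ℓ - (r.val - 1))
            else (if r = c then 1 else 0) + (Mp - 1) * w (ℓ - (r.val - 1))) 0 j.succ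
          = -(w (ℓ - rj.val)) * (Mp - 1) := by
        simp [Fin.val_succ, Fin.succ_ne_zero]
      rw [hhead]
      by_cases hj : rj = j
      · subst hj
        simp [Matrix.one_apply, Fin.val_succ]
        ring
      · have : ¬ (rj.succ = j.succ) := fun h => hj (Fin.succ_inj.mp h)
        simp [Matrix.one_apply, this, hj, Fin.val_succ]
        ring


theorem lag_reflect_sum {M : Type*} [AddCommMonoid M] (ℓ : ℕ) (f : ℕ → M) :
    ∑ i : Fin (ℓ + 1), f (ℓ - i.val) = ∑ k ∈ Finset.range (ℓ + 1), f k :=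
  calc ∑ i : Fin (ℓ + 1), f (ℓ - i.val)
      = ∑ j ∈ Finset.range (ℓ + 1), f (ℓ - j) := Fin.sum_univ_eq_sum_range (fun j => f (ℓ - j)) (ℓ + 1)
    _ = ∑ j ∈ Finset.range (ℓ + 1), f (ℓ + 1 - 1 - j) := rfl
    _ = ∑ j ∈ Finset.range (ℓ + 1), f j := Finset.sum_range_reflect f (ℓ + 1)

end Aux

/-- For distinct nodes `τ_0, …, τ_ℓ` with barycentric weights `β_k`,
invertible values `P_0, …, P_ℓ` and `P(z) = Σ P_k w_k(z)`, the Lagrange-basis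
companion pencil `L(z)` (blocks encoded on `Fin (ℓ+2) × Fin n`, block index first)
is a linearization of `P(z)`: there exist unimodular matrix polynomials `E(z)`,
`F(z)` with `E(z)·L(z)·F(z) = diag(P(z), I_n, …, I_n)` (`ℓ+1` identity blocks). -/
theorem lagrange_pencil_is_linearization
    {F : Type*} [Field F] (n ℓ : ℕ) (hn : 1 ≤ n) (hℓ : 1 ≤ ℓ)
    (τ : ℕ → F) (hτ : ∀ j ≤ ℓ, ∀ k ≤ ℓ, j ≠ k → τ j ≠ τ k)
    (β : ℕ → F)
    (hβ : ∀ k ≤ ℓ, β k = ∏ j ∈ (Finset.range (ℓ + 1)).erase k, (τ k - τ j)⁻¹)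
    (Pv : ℕ → Matrix (Fin n) (Fin n) F)
    (hPv : ∀ k ≤ ℓ, IsUnit (Pv k))
    (P : Matrix (Fin n) (Fin n) (Polynomial F))
    (hP : P = ∑ k ∈ Finset.range (ℓ + 1),
      (C (β k) * ∏ j ∈ (Finset.range (ℓ + 1)).erase k, (X - C (τ j))) •
        (Pv k).map C)
    (L : Matrix (Fin (ℓ + 2) × Fin n) (Fin (ℓ + 2) × Fin n) (Polynomial F))
    (hL : ∀ r c : Fin (ℓ + 2), ∀ s t : Fin n, L (r, s) (c, t) =
      if r.val = 0 then
        (if c.val = 0 then 0 else (-(Pv (ℓ - (c.val - 1))).map C) s t)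
      else if c.val = 0 then (if s = t then C (β (ℓ - (r.val - 1))) else 0)
      else if r = c then (if s = t then X - C (τ (ℓ - (r.val - 1))) else 0)
      else 0) :
    ∃ E Fm : Matrix (Fin (ℓ + 2) × Fin n) (Fin (ℓ + 2) × Fin n) (Polynomial F),
      (∃ c : F, c ≠ 0 ∧ E.det = C c) ∧
      (∃ c : F, c ≠ 0 ∧ Fm.det = C c) ∧
      E * L * Fm = Matrix.of fun q r : Fin (ℓ + 2) × Fin n =>
        if q.1 = r.1 then
          (if q.1.val = 0 then P q.2 r.2 else if q.2 = r.2 then 1 else 0)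
        else 0 := by
  classical
  -- scalar objects
  set Mp : F[X] := ∏ j ∈ Finset.range (ℓ + 1), (X - C (τ j)) with hMp
  set w : ℕ → F[X] :=
    fun k => C (β k) * ∏ j ∈ (Finset.range (ℓ + 1)).erase k, (X - C (τ j)) with hwdef
  have hwfin : ∑ i : Fin (ℓ + 1), w (ℓ - i.val) = 1 :=
    lag_sum_fin ℓ τ hτ β hβ (lag_sum_wk ℓ τ hτ β hβ)
  set S1 : Matrix (Fin (ℓ + 2)) (Fin (ℓ + 2)) F[X] := Matrix.of fun r c : Fin (ℓ + 2) =>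
      if r.val = 0 then (if c.val = 0 then Mp else 1 - Mp)
      else if c.val = 0 then -(w (ℓ - (r.val - 1)))
      else if r = c then 1 else 0 with hS1def
  set S1i : Matrix (Fin (ℓ + 2)) (Fin (ℓ + 2)) F[X] := Matrix.of fun r c : Fin (ℓ + 2) =>
      if r.val = 0 then (if c.val = 0 then 1 else Mp - 1)
      else if c.val = 0 then w (ℓ - (r.val - 1))
      else (if r = c then 1 else 0) + (Mp - 1) * w (ℓ - (r.val - 1)) with hS1idef
  set S2 : Matrix (Fin (ℓ + 2)) (Fin (ℓ + 2)) F[X] := Matrix.of fun r c : Fin (ℓ + 2) =>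
      if r.val = 0 then (if c.val = 0 then 1 else 0)
      else if c.val = 0 then 0
      else (if r = c then X - C (τ (ℓ - (r.val - 1))) else 0)
        + (1 - Mp) * C (β (ℓ - (r.val - 1))) with hS2def
  have hS1mul : S1 * S1i = 1 := lag_S1_mul_S1inv ℓ Mp w hwfin
  have hdetS2 : S2.det = 1 := lag_det_S2 ℓ τ hτ β hβ
  set G : Matrix (Fin (ℓ + 2)) (Fin (ℓ + 2)) F[X] := S2.adjugate with hGdef
  have hS2G : S2 * G = 1 := by rw [hGdef, Matrix.mul_adjugate, hdetS2, one_smul]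
  have hGS2 : G * S2 = 1 := by rw [hGdef, Matrix.adjugate_mul, hdetS2, one_smul]
  have hGcol : ∀ u : Fin (ℓ + 2), G u 0 = if u = 0 then 1 else 0 := by
    intro u
    have h1 := congrFun (congrFun hGS2 u) 0
    rw [Matrix.mul_apply] at h1
    have h2 : ∀ x : Fin (ℓ + 2), G u x * S2 x 0 = if x = 0 then G u x else 0 := by
      intro x
      by_cases hx : x = 0
      · subst hx; simp [hS2def]
      · have : ¬ (x.val = 0) := fun h => hx (Fin.ext (by simpa using h))
        simp [hS2def, this, hx]
    rw [Finset.sum_congr rfl fun x _ => h2 x, Finset.sum_ite_eq' Finset.univ 0 (fun x => G u x)] at h1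
    simpa [Matrix.one_apply] using h1
  -- big matrices
  set bF1 : Matrix (Fin (ℓ + 2) × Fin n) (Fin (ℓ + 2) × Fin n) F[X] :=
    S1 ⊗ₖ (1 : Matrix (Fin n) (Fin n) F[X]) with hbF1def
  set bS1i := S1i ⊗ₖ (1 : Matrix (Fin n) (Fin n) F[X]) with hbS1idef
  set bS2 := S2 ⊗ₖ (1 : Matrix (Fin n) (Fin n) F[X]) with hbS2def
  set bG := G ⊗ₖ (1 : Matrix (Fin n) (Fin n) F[X]) with hbGdef
  have hbF1inv : bF1 * bS1i = 1 := by
    rw [hbF1def, hbS1idef, ← Matrix.mul_kronecker_mul, hS1mul, Matrix.one_mul,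
      Matrix.one_kronecker_one]
  have hbGS2 : bG * bS2 = 1 := by
    rw [hbGdef, hbS2def, ← Matrix.mul_kronecker_mul, hGS2, Matrix.one_mul,
      Matrix.one_kronecker_one]
  have hbS2G : bS2 * bG = 1 := by
    rw [hbS2def, hbGdef, ← Matrix.mul_kronecker_mul, hS2G, Matrix.one_mul,
      Matrix.one_kronecker_one]
  -- P entrywise
  have hPst : ∀ s t : Fin n, P s t =
      ∑ i : Fin (ℓ + 1), w (ℓ - i.val) * C (Pv (ℓ - i.val) s t) := by
    intro s t
    rw [lag_reflect_sum ℓ (fun k => w k * C (Pv k s t)), hP, Matrix.sum_apply]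
    exact Finset.sum_congr rfl fun k _ => by
      simp [hwdef, Matrix.smul_apply, smul_eq_mul, Matrix.map_apply]
  -- the key product computation:  L * bF1
  have hA : ∀ (r c : Fin (ℓ + 2)) (s t : Fin n), (L * bF1) (r, s) (c, t) =
      if r.val = 0 then (if c.val = 0 then P s t else -(C (Pv (ℓ - (c.val - 1)) s t)))
      else S2 r c * (if s = t then 1 else 0) := by
    intro r c s t
    rw [Matrix.mul_apply, Fintype.sum_prod_type]
    have hcol : ∀ u : Fin (ℓ + 2),
        (∑ v : Fin n, L (r, s) (u, v) * bF1 (u, v) (c, t)) = L (r, s) (u, t) * S1 u c := by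
      intro u
      have h1 : ∀ v : Fin n, L (r, s) (u, v) * bF1 (u, v) (c, t)
          = if v = t then L (r, s) (u, v) * S1 u c else 0 := by
        intro v
        have : bF1 (u, v) (c, t) = S1 u c * (if v = t then 1 else 0) := by
          rw [hbF1def, Matrix.kroneckerMap_apply, Matrix.one_apply]
        rw [this]
        by_cases hv : v = t <;> simp [hv, mul_comm]
      rw [Finset.sum_congr rfl fun v _ => h1 v,
        Finset.sum_ite_eq' Finset.univ t (fun v => L (r, s) (u, v) * S1 u c)]
      simp
    rw [Finset.sum_congr rfl fun u _ => hcol u, Fin.sum_univ_succ]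
    by_cases hr : r = 0
    · subst hr
      have hhead : L ((0 : Fin (ℓ + 2)), s) ((0 : Fin (ℓ + 2)), t) = 0 := by
        rw [hL]; simp
      by_cases hc : c = 0
      · subst hc
        have hterms : ∀ i : Fin (ℓ + 1),
            L ((0 : Fin (ℓ + 2)), s) (i.succ, t) * S1 i.succ 0
              = w (ℓ - i.val) * C (Pv (ℓ - i.val) s t) := by
          intro i
          rw [hL, hS1def]
          simp only [Matrix.of_apply, Fin.val_succ, Fin.val_zero, Nat.succ_ne_zero,
            if_false, if_true, Nat.add_sub_cancel, reduceIte, Matrix.neg_apply,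
            Matrix.map_apply]
          ring
        rw [hhead, zero_mul, zero_add, Finset.sum_congr rfl fun i _ => hterms i]
        rw [← hPst s t]
        simp
      · obtain ⟨j, rfl⟩ := Fin.eq_succ_of_ne_zero hc
        have hterms : ∀ i : Fin (ℓ + 1),
            L ((0 : Fin (ℓ + 2)), s) (i.succ, t) * S1 i.succ j.succ
              = if i = j then -(C (Pv (ℓ - i.val) s t)) else 0 := by
          intro i
          rw [hL, hS1def]
          simp only [Matrix.of_apply, Fin.val_succ, Fin.val_zero, Nat.succ_ne_zero,
            if_false, if_true, Nat.add_sub_cancel, reduceIte, Matrix.neg_apply,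
            Matrix.map_apply, Fin.succ_inj]
          by_cases hij : i = j <;> simp [hij]
        rw [hhead, zero_mul, zero_add, Finset.sum_congr rfl fun i _ => hterms i,
          Finset.sum_ite_eq' Finset.univ j (fun i => -(C (Pv (ℓ - i.val) s t)))]
        simp [Fin.val_succ]
    · obtain ⟨rj, rfl⟩ := Fin.eq_succ_of_ne_zero hr
      have hterms : ∀ i : Fin (ℓ + 1),
          L (rj.succ, s) (i.succ, t) * S1 i.succ c
            = if i = rj then (if s = t then X - C (τ (ℓ - rj.val)) else 0) * S1 rj.succ c
              else 0 := by
        intro i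
        rw [hL]
        simp only [Fin.val_succ, Nat.succ_ne_zero, if_false, Nat.add_sub_cancel,
          reduceIte, Fin.succ_inj]
        by_cases hij : rj = i
        · subst hij; simp
        · have h5 : ¬ (rj.succ = i.succ) := fun h => hij (Fin.succ_inj.mp h)
          have h6 : ¬ (i = rj) := fun h => hij h.symm
          simp [h5, h6]
          exact fun h => absurd h hij
      rw [Finset.sum_congr rfl fun i _ => hterms i,
        Finset.sum_ite_eq' Finset.univ rj
          (fun i => (if s = t then X - C (τ (ℓ - rj.val)) else 0) * S1 rj.succ c)]
      simp only [Finset.mem_univ, if_true]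
      have hheadL : L (rj.succ, s) ((0 : Fin (ℓ + 2)), t)
          = if s = t then C (β (ℓ - rj.val)) else 0 := by
        rw [hL]; simp [Fin.val_succ]
      rw [hheadL]
      by_cases hc : c = 0
      · subst hc
        have h1 : S1 (0 : Fin (ℓ + 2)) (0 : Fin (ℓ + 2)) = Mp := by simp [hS1def]
        have h2 : S1 rj.succ (0 : Fin (ℓ + 2)) = -(w (ℓ - rj.val)) := by
          simp [hS1def, Fin.val_succ]
        have h3 : S2 rj.succ (0 : Fin (ℓ + 2)) = 0 := by simp [hS2def, Fin.val_succ]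
        rw [h1, h2, h3, zero_mul]
        simp only [Fin.val_succ, Nat.succ_ne_zero, if_false, reduceIte]
        by_cases hst : s = t
        · simp only [hst, if_true, if_pos rfl]
          have key : (X - C (τ (ℓ - rj.val))) * w (ℓ - rj.val)
              = C (β (ℓ - rj.val)) * Mp := by
            simp only [hwdef, hMp]
            rw [← lag_d_mul_m ℓ τ (ℓ - rj.val) (by simp only [Finset.mem_range]; omega)]
            ring
          linear_combination -key
        · simp [hst]
      · obtain ⟨j, rfl⟩ := Fin.eq_succ_of_ne_zero hc
        have h1 : S1 (0 : Fin (ℓ + 2)) j.succ = 1 - Mp := by simp [hS1def, Fin.val_succ]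
        have h2 : S1 rj.succ j.succ = if rj = j then 1 else 0 := by
          simp [hS1def, Fin.val_succ, Fin.succ_inj]
        have h3 : S2 rj.succ j.succ = (if rj = j then X - C (τ (ℓ - rj.val)) else 0)
            + (1 - Mp) * C (β (ℓ - rj.val)) := by
          simp [hS2def, Fin.val_succ, Fin.succ_inj]
        rw [h1, h2, h3]
        simp only [Fin.val_succ, Nat.succ_ne_zero, if_false, reduceIte]
        by_cases hst : s = t <;> by_cases hij : rj = j <;> simp [hst, hij] <;> ring
  -- the matrix A2 = L * bF1 * bG
  set A2 : Matrix (Fin (ℓ + 2) × Fin n) (Fin (ℓ + 2) × Fin n) F[X] := L * bF1 * bG with hA2def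
  have hArow : ∀ (rj : Fin (ℓ + 1)) (s : Fin n) (q : Fin (ℓ + 2) × Fin n),
      (L * bF1) (rj.succ, s) q = bS2 (rj.succ, s) q := by
    intro rj s q
    obtain ⟨c, t⟩ := q
    rw [hA rj.succ c s t]
    have h0 : ¬ ((rj.succ : Fin (ℓ + 2)).val = 0) := by simp [Fin.val_succ]
    rw [if_neg h0, hbS2def, Matrix.kroneckerMap_apply, Matrix.one_apply]
  have hA2row : ∀ (rj : Fin (ℓ + 1)) (s : Fin n) (q : Fin (ℓ + 2) × Fin n),
      A2 (rj.succ, s) q = (1 : Matrix (Fin (ℓ + 2) × Fin n) (Fin (ℓ + 2) × Fin n) F[X]) (rj.succ, s) q := by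
    intro rj s q
    rw [hA2def, Matrix.mul_apply, Finset.sum_congr rfl
      (fun j _ => by rw [hArow rj s j] :
        ∀ j ∈ Finset.univ, (L * bF1) (rj.succ, s) j * bG j q = bS2 (rj.succ, s) j * bG j q),
      ← Matrix.mul_apply, hbS2G]
  have hA2col : ∀ (p : Fin (ℓ + 2) × Fin n) (t : Fin n),
      A2 p ((0 : Fin (ℓ + 2)), t) = (L * bF1) p ((0 : Fin (ℓ + 2)), t) := by
    intro p t
    rw [hA2def, Matrix.mul_apply]
    have h1 : ∀ j : Fin (ℓ + 2) × Fin n, (L * bF1) p j * bG j ((0 : Fin (ℓ + 2)), t)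
        = if j = ((0 : Fin (ℓ + 2)), t) then (L * bF1) p j else 0 := by
      rintro ⟨u, v⟩
      rw [hbGdef, Matrix.kroneckerMap_apply, hGcol u, Matrix.one_apply]
      by_cases hu : u = 0 <;> by_cases hv : v = t <;>
        simp [hu, hv, Prod.ext_iff]
    rw [Finset.sum_congr rfl fun j _ => h1 j,
      Finset.sum_ite_eq' Finset.univ ((0 : Fin (ℓ + 2)), t) (fun j => (L * bF1) p j)]
    simp
  -- E and its inverse
  set Ei : Matrix (Fin (ℓ + 2) × Fin n) (Fin (ℓ + 2) × Fin n) F[X] := Matrix.of fun p q =>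
    if p.1.val = 0 ∧ ¬ (q.1.val = 0) then -(A2 p q) else (if p = q then 1 else 0) with hEdef
  set Einv : Matrix (Fin (ℓ + 2) × Fin n) (Fin (ℓ + 2) × Fin n) F[X] := Matrix.of fun p q =>
    if p.1.val = 0 ∧ ¬ (q.1.val = 0) then A2 p q else (if p = q then 1 else 0) with hEinvdef
  -- multiplication skeleton for Ei
  have hEmul' : ∀ (Z : Matrix (Fin (ℓ + 2) × Fin n) (Fin (ℓ + 2) × Fin n) F[X])
      (rj : Fin (ℓ + 1)) (s : Fin n) (q : Fin (ℓ + 2) × Fin n),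
      (Ei * Z) (rj.succ, s) q = Z (rj.succ, s) q := by
    intro Z rj s q
    rw [Matrix.mul_apply]
    have h1 : ∀ j : Fin (ℓ + 2) × Fin n, Ei (rj.succ, s) j * Z j q
        = if (rj.succ, s) = j then Z j q else 0 := by
      intro j
      have h0 : ¬ ((rj.succ : Fin (ℓ + 2)).val = 0) := by simp [Fin.val_succ]
      rw [hEdef]
      simp only [Matrix.of_apply, h0, false_and, if_false]
      by_cases hj : (rj.succ, s) = j <;> simp [hj]
    rw [Finset.sum_congr rfl fun j _ => h1 j,
      Finset.sum_ite_eq Finset.univ ((rj.succ : Fin (ℓ + 2)), s) (fun j => Z j q)]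
    simp
  have hEmul : ∀ (Z : Matrix (Fin (ℓ + 2) × Fin n) (Fin (ℓ + 2) × Fin n) F[X])
      (s : Fin n) (q : Fin (ℓ + 2) × Fin n),
      (Ei * Z) ((0 : Fin (ℓ + 2)), s) q = Z ((0 : Fin (ℓ + 2)), s) q +
        ∑ i : Fin (ℓ + 1), ∑ v : Fin n,
          -(A2 ((0 : Fin (ℓ + 2)), s) (i.succ, v)) * Z (i.succ, v) q := by
    intro Z s q
    rw [Matrix.mul_apply, Fintype.sum_prod_type, Fin.sum_univ_succ]
    have h1 : ∀ v : Fin n, Ei ((0 : Fin (ℓ + 2)), s) ((0 : Fin (ℓ + 2)), v) * Z ((0 : Fin (ℓ + 2)), v) q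
        = if v = s then Z ((0 : Fin (ℓ + 2)), v) q else 0 := by
      intro v
      rw [hEdef]
      simp only [Matrix.of_apply, Fin.val_zero, not_true, and_false, if_false]
      by_cases hv : v = s
      · subst hv; simp
      · have : ¬ (((0 : Fin (ℓ + 2)), s) = ((0 : Fin (ℓ + 2)), v)) := by
          simp [Prod.ext_iff]; exact fun h => hv h.symm
        simp [this, hv]
    have hfirst : ∑ v : Fin n, Ei ((0 : Fin (ℓ + 2)), s) ((0 : Fin (ℓ + 2)), v) * Z ((0 : Fin (ℓ + 2)), v) q
        = Z ((0 : Fin (ℓ + 2)), s) q := by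
      rw [Finset.sum_congr rfl fun v _ => h1 v,
        Finset.sum_ite_eq' Finset.univ s (fun v => Z ((0 : Fin (ℓ + 2)), v) q)]
      simp
    have hsecond : ∀ (i : Fin (ℓ + 1)) (v : Fin n), Ei ((0 : Fin (ℓ + 2)), s) (i.succ, v)
        = -(A2 ((0 : Fin (ℓ + 2)), s) (i.succ, v)) := by
      intro i v
      have h0 : ¬ ((i.succ : Fin (ℓ + 2)).val = 0) := by simp [Fin.val_succ]
      rw [hEdef]
      simp only [Matrix.of_apply, Fin.val_zero, h0, not_false_iff, and_true, if_true]
    rw [hfirst, Finset.sum_congr rfl (fun i _ => Finset.sum_congr rfl fun v _ => by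
      rw [hsecond i v])]
  have hDelta : ∀ (p q : Fin (ℓ + 2) × Fin n),
      (∑ i : Fin (ℓ + 1), ∑ v : Fin n, -(A2 p (i.succ, v)) *
        ((1 : Matrix (Fin (ℓ + 2) × Fin n) (Fin (ℓ + 2) × Fin n) F[X]) (i.succ, v) q))
      = if q.1.val = 0 then 0 else -(A2 p q) := by
    intro p q
    obtain ⟨c, t⟩ := q
    by_cases hc : c = 0
    · subst hc
      simp only [Fin.val_zero, if_true, reduceIte]
      refine Finset.sum_eq_zero fun i _ => Finset.sum_eq_zero fun v _ => ?_
      have : ¬ ((i.succ, v) = ((0 : Fin (ℓ + 2)), t)) := by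
        simp [Prod.ext_iff, Fin.succ_ne_zero]
      rw [Matrix.one_apply, if_neg this, mul_zero]
    · obtain ⟨j, rfl⟩ := Fin.eq_succ_of_ne_zero hc
      have hcv : ¬ ((j.succ : Fin (ℓ + 2)).val = 0) := by simp [Fin.val_succ]
      rw [if_neg hcv]
      have h1 : ∀ (i : Fin (ℓ + 1)) (v : Fin n),
          -(A2 p (i.succ, v)) * (1 : Matrix (Fin (ℓ + 2) × Fin n) (Fin (ℓ + 2) × Fin n) F[X]) (i.succ, v) (j.succ, t)
          = if v = t then (if i = j then -(A2 p (i.succ, v)) else 0) else 0 := by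
        intro i v
        rw [Matrix.one_apply]
        by_cases hij : i = j <;> by_cases hv : v = t <;>
          simp [hij, hv, Prod.ext_iff, Fin.succ_inj]
      rw [Finset.sum_congr rfl fun i _ => Finset.sum_congr rfl fun v _ => h1 i v]
      rw [Finset.sum_congr rfl (fun i _ => Finset.sum_ite_eq' Finset.univ t
        (fun v => if i = j then -(A2 p (i.succ, v)) else 0))]
      simp only [Finset.mem_univ, if_true]
      rw [Finset.sum_ite_eq' Finset.univ j (fun i => -(A2 p (i.succ, t)))]
      simp
  -- E * A2 = target diagonal
  have hEA2 : Ei * A2 = Matrix.of fun q r : Fin (ℓ + 2) × Fin n =>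
      if q.1 = r.1 then
        (if q.1.val = 0 then P q.2 r.2 else if q.2 = r.2 then 1 else 0)
      else 0 := by
    refine Matrix.ext fun p q => ?_
    obtain ⟨r, s⟩ := p
    by_cases hr : r = 0
    · subst hr
      rw [hEmul A2 s q]
      have h2 : ∑ i : Fin (ℓ + 1), ∑ v : Fin n,
          -(A2 ((0 : Fin (ℓ + 2)), s) (i.succ, v)) * A2 (i.succ, v) q
          = if q.1.val = 0 then 0 else -(A2 ((0 : Fin (ℓ + 2)), s) q) := by
        rw [← hDelta ((0 : Fin (ℓ + 2)), s) q]
        exact Finset.sum_congr rfl fun i _ => Finset.sum_congr rfl fun v _ => by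
          rw [hA2row i v q]
      rw [h2]
      obtain ⟨c, t⟩ := q
      by_cases hc : c = 0
      · subst hc
        simp only [Fin.val_zero, if_true, reduceIte, add_zero]
        rw [hA2col ((0 : Fin (ℓ + 2)), s) t, hA 0 0 s t]
        simp
      · have hcv : ¬ ((c : Fin (ℓ + 2)).val = 0) := fun h => hc (Fin.ext (by simpa using h))
        rw [if_neg hcv, add_neg_cancel]
        have : ¬ ((0 : Fin (ℓ + 2)) = c) := fun h => hc h.symm
        simp [this]
    · obtain ⟨rj, rfl⟩ := Fin.eq_succ_of_ne_zero hr
      rw [hEmul' A2 rj s q, hA2row rj s q]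
      obtain ⟨c, t⟩ := q
      rw [Matrix.one_apply]
      have h0 : ¬ ((rj.succ : Fin (ℓ + 2)).val = 0) := by simp [Fin.val_succ]
      by_cases hc : rj.succ = c
      · subst hc
        simp [Prod.ext_iff, h0]
      · simp [hc, Prod.ext_iff]
  -- E * Einv = 1
  have hEunit : Ei * Einv = 1 := by
    refine Matrix.ext fun p q => ?_
    obtain ⟨r, s⟩ := p
    by_cases hr : r = 0
    · subst hr
      rw [hEmul Einv s q]
      have hErow : ∀ (i : Fin (ℓ + 1)) (v : Fin n), Einv (i.succ, v) q
          = (1 : Matrix (Fin (ℓ + 2) × Fin n) (Fin (ℓ + 2) × Fin n) F[X]) (i.succ, v) q := by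
        intro i v
        have h0 : ¬ ((i.succ : Fin (ℓ + 2)).val = 0) := by simp [Fin.val_succ]
        rw [hEinvdef, Matrix.one_apply]
        simp only [Matrix.of_apply, h0, false_and, if_false]
      have h2 : ∑ i : Fin (ℓ + 1), ∑ v : Fin n,
          -(A2 ((0 : Fin (ℓ + 2)), s) (i.succ, v)) * Einv (i.succ, v) q
          = if q.1.val = 0 then 0 else -(A2 ((0 : Fin (ℓ + 2)), s) q) := by
        rw [← hDelta ((0 : Fin (ℓ + 2)), s) q]
        exact Finset.sum_congr rfl fun i _ => Finset.sum_congr rfl fun v _ => by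
          rw [hErow i v]
      rw [h2]
      obtain ⟨c, t⟩ := q
      by_cases hc : c = 0
      · subst hc
        simp only [Fin.val_zero, if_true, reduceIte, add_zero]
        rw [hEinvdef, Matrix.one_apply]
        simp only [Matrix.of_apply, Fin.val_zero, not_true, and_false, if_false]
      · have hcv : ¬ ((c : Fin (ℓ + 2)).val = 0) := fun h => hc (Fin.ext (by simpa using h))
        rw [if_neg hcv]
        have hEv : Einv ((0 : Fin (ℓ + 2)), s) (c, t) = A2 ((0 : Fin (ℓ + 2)), s) (c, t) := by
          rw [hEinvdef]
          simp only [Matrix.of_apply, Fin.val_zero, hcv, not_false_iff, and_true, if_true]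
        rw [hEv, add_neg_cancel, Matrix.one_apply]
        have : ¬ (((0 : Fin (ℓ + 2)), s) = (c, t)) := by
          simp [Prod.ext_iff]; exact fun h => absurd h.symm hc
        rw [if_neg this]
    · obtain ⟨rj, rfl⟩ := Fin.eq_succ_of_ne_zero hr
      rw [hEmul' Einv rj s q]
      have h0 : ¬ ((rj.succ : Fin (ℓ + 2)).val = 0) := by simp [Fin.val_succ]
      rw [hEinvdef, Matrix.one_apply]
      simp only [Matrix.of_apply, h0, false_and, if_false]
  -- assemble
  refine ⟨Ei, bF1 * bG, ?_, ?_, ?_⟩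
  · have hu : IsUnit Ei.det := IsUnit.of_mul_eq_one Einv.det
      (by rw [← Matrix.det_mul, hEunit, Matrix.det_one])
    obtain ⟨cc, hcc, hccdet⟩ := Polynomial.isUnit_iff.mp hu
    exact ⟨cc, hcc.ne_zero, hccdet.symm⟩
  · have hFinv : (bF1 * bG) * (bS2 * bS1i) = 1 := by
      calc (bF1 * bG) * (bS2 * bS1i) = bF1 * (bG * bS2) * bS1i := by
            rw [Matrix.mul_assoc bF1 bG, ← Matrix.mul_assoc bG bS2,
              ← Matrix.mul_assoc bF1 (bG * bS2)]
        _ = 1 := by rw [hbGS2, Matrix.mul_one, hbF1inv]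
    have hu : IsUnit (bF1 * bG).det := IsUnit.of_mul_eq_one (bS2 * bS1i).det
      (by rw [← Matrix.det_mul, hFinv, Matrix.det_one])
    obtain ⟨cc, hcc, hccdet⟩ := Polynomial.isUnit_iff.mp hu
    exact ⟨cc, hcc.ne_zero, hccdet.symm⟩
  · rw [← Matrix.mul_assoc (Ei * L) bF1 bG, Matrix.mul_assoc Ei L bF1,
      Matrix.mul_assoc Ei (L * bF1) bG, ← hA2def, hEA2]
end

section
/- Let F be a field, n ≥ 1, ℓ ≥ 0, and let τ_0, …, τ_ℓ ∈ F be distinct with barycentric weights β_k = ∏_{j≠k} 1/(τ_k − τ_j). Let P(z) = Σ_{m=0}^ℓ A_m z^m with A_m ∈ F^{n×n}, and set P_k = P(τ_k). Define (ℓ+2)×(ℓ+2) block matrices with n×n blocks: C_{L,1} = diag(0, I_n, …, I_n); C_{L,0} with first block row (0, −P_ℓ, −P_{ℓ−1}, …, −P_0), first block column below the corner (β_ℓ I_n, β_{ℓ−1} I_n, …, β_0 I_n), diagonal blocks τ_ℓ I_n, …, τ_0 I_n in positions (1+i, 1+i) for 0 ≤ i ≤ ℓ, other blocks 0; C_{M,1}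 = diag(0, I_n, …, I_n); C_{M,0} with first block row (0, −A_ℓ, −A_{ℓ−1}, …, −A_0), subdiagonal blocks I_n in positions (i, i−1) for 2 ≤ i ≤ ℓ+2, other blocks 0. Let V be the (ℓ+1)×(ℓ+1) Vandermonde matrix with V_{i,j} = τ_{ℓ+1−j}^{ℓ+1−i} for 1 ≤ i, j ≤ ℓ+1, let the node polynomial be w(z) = ∏_{k=0}^ℓ (z − τ_k) = z^{ℓ+1} + q_ℓ z^ℓ + ⋯ + q_0, and let q be the block row (q_ℓ I_n, q_{ℓ−1} I_n, …, q_0 I_n). Define the constant matrices U = diag(I_n, V ⊗ I_n) and W = [[I_n, q], [0, V^{−1} ⊗ I_n]]. Then U·C_{L,1}·W = C_{M,1} and U·C_{L,0}·W = C_{M,0}; thus the Lagrange-basis pencil z·C_{L,1} − C_{L,0} is strictly equivalent to the monomial-basis pencil z·C_{M,1} − C_{M,0} (the second companion pencil of P regarded as a matrix polynomial of grade ℓ+2). Moreover det U = ±∏_{0≤i<j≤ℓ} (τ_j − τ_i)^n, which is nonzero. -/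
open Polynomial

open Finset Matrix Kronecker

private lemma prod_pairs_aux {F : Type*} [CommRing F] (N : ℕ) (f : ℕ → ℕ → F) :
    ∏ i : Fin N, ∏ j ∈ Finset.Ioi i, f i.val j.val
      = ∏ j ∈ Finset.range N, ∏ i ∈ Finset.range j, f i j := by
  rw [Finset.prod_comm' (t' := (Finset.univ : Finset (Fin N))) (s' := fun j => Finset.Iio j)
    (fun {x y} => by simp [Finset.mem_Ioi, Finset.mem_Iio])]
  rw [← Fin.prod_univ_eq_prod_range (fun j => ∏ i ∈ Finset.range j, f i j) N]
  refine Finset.prod_congr rfl fun j _ => ?_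
  refine Finset.prod_bij' (fun (i : Fin N) _ => i.val)
    (fun i hi => (⟨i, lt_trans (Finset.mem_range.mp hi) j.isLt⟩ : Fin N)) ?_ ?_ ?_ ?_ ?_
  · intro a ha
    exact Finset.mem_range.mpr (Fin.lt_def.mp (Finset.mem_Iio.mp ha))
  · intro a ha
    exact Finset.mem_Iio.mpr (Fin.lt_def.mpr (Finset.mem_range.mp ha))
  · intro a ha; rfl
  · intro a ha; rfl
  · intro a ha; rfl

private lemma weight_sum_aux {F : Type*} [Field F] (ℓ : ℕ) (τ : ℕ → F)
    (hτ : ∀ j ≤ ℓ, ∀ k ≤ ℓ, j ≠ k → τ j ≠ τ k) (m : ℕ) (hm : m ≤ ℓ) :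
    ∑ k ∈ Finset.range (ℓ+1), (∏ j ∈ (Finset.range (ℓ+1)).erase k, (τ k - τ j)⁻¹) * τ k ^ m
      = if m = ℓ then 1 else 0 := by
  classical
  have hinj : Set.InjOn τ (Finset.range (ℓ+1)) := by
    intro a ha b hb hab
    by_contra h
    exact hτ a (by simpa [Nat.lt_succ_iff] using ha) b (by simpa [Nat.lt_succ_iff] using hb) h hab
  have hdeg : (X ^ m : F[X]).degree < (#(Finset.range (ℓ+1)) : ℕ) := by
    rw [degree_X_pow, Finset.card_range]
    exact_mod_cast Nat.lt_succ_of_le hm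
  have h := Lagrange.eq_interpolate (v := τ) hinj hdeg
  have h2 := congrArg (fun p => Polynomial.coeff p ℓ) h
  simp only [Lagrange.interpolate_apply, finset_sum_coeff, coeff_C_mul, coeff_X_pow,
    eval_pow, eval_X] at h2
  have hb : ∀ k ∈ Finset.range (ℓ+1), (Lagrange.basis (Finset.range (ℓ+1)) τ k).coeff ℓ
      = ∏ j ∈ (Finset.range (ℓ+1)).erase k, (τ k - τ j)⁻¹ := by
    intro k hk
    have : Lagrange.basis (Finset.range (ℓ+1)) τ k
        = C (∏ j ∈ (Finset.range (ℓ+1)).erase k, (τ k - τ j)⁻¹)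
          * ∏ j ∈ (Finset.range (ℓ+1)).erase k, (X - C (τ j)) := by
      rw [Lagrange.basis, map_prod, ← Finset.prod_mul_distrib]
      exact Finset.prod_congr rfl fun j _ => rfl
    rw [this, coeff_C_mul]
    have hmon : (∏ j ∈ (Finset.range (ℓ+1)).erase k, (X - C (τ j))).Monic :=
      monic_prod_of_monic _ _ fun _ _ => monic_X_sub_C _
    have hdeg2 : (∏ j ∈ (Finset.range (ℓ+1)).erase k, (X - C (τ j))).natDegree = ℓ := by
      rw [natDegree_prod_of_monic _ _ fun _ _ => monic_X_sub_C _]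
      simp [Finset.card_erase_of_mem hk]
    have hc := hmon.coeff_natDegree
    rw [hdeg2] at hc
    rw [hc, mul_one]
  rw [Finset.sum_congr rfl fun k hk => by rw [hb k hk]] at h2
  rw [Finset.sum_congr rfl fun (k:ℕ) (_ : k ∈ Finset.range (ℓ+1)) =>
    mul_comm (∏ j ∈ (Finset.range (ℓ+1)).erase k, (τ k - τ j)⁻¹) (τ k ^ m), ← h2]
  by_cases h : m = ℓ
  · simp [h]
  · simp only [if_neg h, if_neg (fun hh : ℓ = m => h hh.symm)]

/-- Strict equivalence of the Lagrange-basis pencil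
`z·C_{L,1} − C_{L,0}` of `P(z) = Σ_{m=0}^ℓ A_m z^m` on `ℓ+1` distinct nodes to the
monomial-basis second companion pencil `z·C_{M,1} − C_{M,0}` of `P` regarded as a
matrix polynomial of grade `ℓ+2`: with `U = diag(I_n, V ⊗ I_n)` and
`W = [[I_n, q],[0, V⁻¹ ⊗ I_n]]` (here `V` is the Vandermonde matrix of the nodes
and `q` the row of coefficients of the node polynomial `w(z)`), one has
`U·C_{L,1}·W = C_{M,1}` and `U·C_{L,0}·W = C_{M,0}`; moreover
`det U = ±∏_{i<j}(τ_j − τ_i)^n ≠ 0`.  Blocks are encoded on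
`Fin (ℓ+2) × Fin n`, block index first. -/
theorem lagrange_strictly_equivalent_monomial
    {F : Type*} [Field F] (n ℓ : ℕ) (hn : 1 ≤ n)
    (τ : ℕ → F) (hτ : ∀ j ≤ ℓ, ∀ k ≤ ℓ, j ≠ k → τ j ≠ τ k)
    (β : ℕ → F)
    (hβ : ∀ k ≤ ℓ, β k = ∏ j ∈ (Finset.range (ℓ + 1)).erase k, (τ k - τ j)⁻¹)
    (A : ℕ → Matrix (Fin n) (Fin n) F)
    (Pval : ℕ → Matrix (Fin n) (Fin n) F)
    (hPval : ∀ k, Pval k = ∑ m ∈ Finset.range (ℓ + 1), (τ k ^ m) • A m)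
    (q : ℕ → F)
    (hq : ∏ k ∈ Finset.range (ℓ + 1), (X - C (τ k)) =
      X ^ (ℓ + 1) + ∑ k ∈ Finset.range (ℓ + 1), C (q k) * X ^ k)
    (V : Matrix (Fin (ℓ + 1)) (Fin (ℓ + 1)) F)
    (hV : ∀ i j : Fin (ℓ + 1), V i j = τ (ℓ - j.val) ^ (ℓ - i.val))
    (CL1 CL0 CM1 CM0 U W : Matrix (Fin (ℓ + 2) × Fin n) (Fin (ℓ + 2) × Fin n) F)
    (hCL1 : ∀ r c : Fin (ℓ + 2), ∀ s t : Fin n, CL1 (r, s) (c, t) =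
      if r = c then (if r.val = 0 then 0 else if s = t then 1 else 0) else 0)
    (hCL0 : ∀ r c : Fin (ℓ + 2), ∀ s t : Fin n, CL0 (r, s) (c, t) =
      if r.val = 0 then
        (if c.val = 0 then 0 else (-(Pval (ℓ - (c.val - 1)))) s t)
      else if c.val = 0 then (if s = t then β (ℓ - (r.val - 1)) else 0)
      else if r = c then (if s = t then τ (ℓ - (r.val - 1)) else 0)
      else 0)
    (hCM1 : ∀ r c : Fin (ℓ + 2), ∀ s t : Fin n, CM1 (r, s) (c, t) =
      if r = c then (if r.val = 0 then 0 else if s = t then 1 else 0) else 0)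
    (hCM0 : ∀ r c : Fin (ℓ + 2), ∀ s t : Fin n, CM0 (r, s) (c, t) =
      if r.val = 0 then
        (if c.val = 0 then 0 else (-(A (ℓ - (c.val - 1)))) s t)
      else if c.val + 1 = r.val then (if s = t then 1 else 0)
      else 0)
    (hU : ∀ r c : Fin (ℓ + 2), ∀ s t : Fin n, U (r, s) (c, t) =
      if r.val = 0 then (if c.val = 0 then (if s = t then 1 else 0) else 0)
      else if c.val = 0 then 0
      else if s = t then
        V ⟨r.val - 1, by have := r.isLt; omega⟩ ⟨c.val - 1, by have := c.isLt; omega⟩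
      else 0)
    (hW : ∀ r c : Fin (ℓ + 2), ∀ s t : Fin n, W (r, s) (c, t) =
      if r.val = 0 then
        (if c.val = 0 then (if s = t then 1 else 0)
         else if s = t then q (ℓ - (c.val - 1)) else 0)
      else if c.val = 0 then 0
      else if s = t then
        V⁻¹ ⟨r.val - 1, by have := r.isLt; omega⟩ ⟨c.val - 1, by have := c.isLt; omega⟩
      else 0) :
    U * CL1 * W = CM1 ∧ U * CL0 * W = CM0 ∧
    (U.det = (∏ j ∈ Finset.range (ℓ + 1), ∏ i ∈ Finset.range j, (τ j - τ i)) ^ n ∨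
     U.det = -((∏ j ∈ Finset.range (ℓ + 1), ∏ i ∈ Finset.range j, (τ j - τ i)) ^ n)) ∧
    (∏ j ∈ Finset.range (ℓ + 1), ∏ i ∈ Finset.range j, (τ j - τ i)) ^ n ≠ 0 := by
  classical
  -- scalar weight-sum identity
  have hS : ∀ m ≤ ℓ, ∑ k ∈ Finset.range (ℓ+1), β k * τ k ^ m = if m = ℓ then 1 else 0 := by
    intro m hm
    rw [Finset.sum_congr rfl fun k hk => by
      rw [hβ k (Nat.lt_succ_iff.mp (Finset.mem_range.mp hk))]]
    exact weight_sum_aux ℓ τ hτ m hm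
  -- node polynomial identity
  have hpow : ∀ k ≤ ℓ, τ k ^ (ℓ+1) = -∑ m ∈ Finset.range (ℓ+1), q m * τ k ^ m := by
    intro k hk
    have h0 : Polynomial.eval (τ k) (∏ j ∈ Finset.range (ℓ+1), (X - C (τ j))) = 0 := by
      rw [Polynomial.eval_prod]
      apply Finset.prod_eq_zero (Finset.mem_range.mpr (Nat.lt_succ_of_le hk))
      simp
    rw [hq] at h0
    simp only [Polynomial.eval_add, Polynomial.eval_pow, Polynomial.eval_X,
      Polynomial.eval_finset_sum, Polynomial.eval_mul, Polynomial.eval_C] at h0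
    exact eq_neg_of_add_eq_zero_left h0
  -- Vandermonde determinant
  have hVsub : V = ((Matrix.vandermonde fun i : Fin (ℓ+1) => τ i.val)ᵀ).submatrix
      Fin.rev Fin.rev := by
    ext i j
    simp only [Matrix.submatrix_apply, Matrix.transpose_apply, Matrix.vandermonde_apply, hV,
      Fin.val_rev, Nat.add_sub_cancel, Nat.succ_sub_succ]
  have hP0 : (∏ j ∈ Finset.range (ℓ + 1), ∏ i ∈ Finset.range j, (τ j - τ i)) ≠ 0 := by
    rw [Finset.prod_ne_zero_iff]
    intro j hj
    rw [Finset.prod_ne_zero_iff]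
    intro i hi
    have hj' : j ≤ ℓ := Nat.lt_succ_iff.mp (Finset.mem_range.mp hj)
    have hi' : i < j := Finset.mem_range.mp hi
    exact sub_ne_zero.mpr (hτ j hj' i (by omega) (by omega))
  have hVdet : V.det = ∏ j ∈ Finset.range (ℓ+1), ∏ i ∈ Finset.range j, (τ j - τ i) := by
    rw [hVsub, show (Fin.rev : Fin (ℓ+1) → Fin (ℓ+1)) = ⇑(Fin.revPerm) from rfl,
      Matrix.det_submatrix_equiv_self, Matrix.det_transpose, Matrix.det_vandermonde]
    exact prod_pairs_aux (ℓ+1) fun a b => τ b - τ a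
  have hVunit : IsUnit V.det := isUnit_iff_ne_zero.mpr (hVdet ▸ hP0)
  have hVV : V * V⁻¹ = 1 := Matrix.mul_nonsing_inv _ hVunit
  -- scalar block matrices
  obtain ⟨u, hu00, hu0s, hus0, huss⟩ :
      ∃ u : Matrix (Fin (ℓ+2)) (Fin (ℓ+2)) F,
        u 0 0 = 1 ∧ (∀ c' : Fin (ℓ+1), u 0 c'.succ = 0) ∧
        (∀ r' : Fin (ℓ+1), u r'.succ 0 = 0) ∧
        (∀ r' c' : Fin (ℓ+1), u r'.succ c'.succ = V r' c') :=
    ⟨Matrix.of fun r c => Fin.cases (Fin.cases (1:F) (fun _ => 0) c)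
        (fun r' => Fin.cases 0 (fun c' => V r' c') c) r,
      by simp, fun c' => by simp, fun r' => by simp, fun r' c' => by simp⟩
  obtain ⟨w, hw00, hw0s, hws0, hwss⟩ :
      ∃ w : Matrix (Fin (ℓ+2)) (Fin (ℓ+2)) F,
        w 0 0 = 1 ∧ (∀ c' : Fin (ℓ+1), w 0 c'.succ = q (ℓ - c'.val)) ∧
        (∀ r' : Fin (ℓ+1), w r'.succ 0 = 0) ∧
        (∀ r' c' : Fin (ℓ+1), w r'.succ c'.succ = V⁻¹ r' c') :=
    ⟨Matrix.of fun r c => Fin.cases (Fin.cases (1:F) (fun c' => q (ℓ - c'.val)) c)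
        (fun r' => Fin.cases 0 (fun c' => V⁻¹ r' c') c) r,
      by simp, fun c' => by simp, fun r' => by simp, fun r' c' => by simp⟩
  obtain ⟨d1, hd10, hd1s0, hd1ss⟩ :
      ∃ d1 : Matrix (Fin (ℓ+2)) (Fin (ℓ+2)) F,
        (∀ c, d1 0 c = 0) ∧ (∀ r' : Fin (ℓ+1), d1 r'.succ 0 = 0) ∧
        (∀ r' c' : Fin (ℓ+1), d1 r'.succ c'.succ = if r' = c' then 1 else 0) :=
    ⟨Matrix.of fun r c => Fin.cases 0
        (fun r' => Fin.cases 0 (fun c' => if r' = c' then (1:F) else 0) c) r,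
      fun c => by simp, fun r' => by simp, fun r' c' => by simp⟩
  obtain ⟨dL, hdL0, hdLs0, hdLss⟩ :
      ∃ dL : Matrix (Fin (ℓ+2)) (Fin (ℓ+2)) F,
        (∀ c, dL 0 c = 0) ∧ (∀ r' : Fin (ℓ+1), dL r'.succ 0 = β (ℓ - r'.val)) ∧
        (∀ r' c' : Fin (ℓ+1), dL r'.succ c'.succ = if r' = c' then τ (ℓ - r'.val) else 0) :=
    ⟨Matrix.of fun r c => Fin.cases 0
        (fun r' => Fin.cases (β (ℓ - r'.val))
          (fun c' => if r' = c' then τ (ℓ - r'.val) else 0) c) r,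
      fun c => by simp, fun r' => by simp, fun r' c' => by simp⟩
  obtain ⟨dM, hdM⟩ :
      ∃ dM : Matrix (Fin (ℓ+2)) (Fin (ℓ+2)) F,
        ∀ r c : Fin (ℓ+2), dM r c = if c.val + 1 = r.val then 1 else 0 :=
    ⟨Matrix.of fun r c => if c.val + 1 = r.val then 1 else 0, fun r c => rfl⟩
  obtain ⟨G, hG00, hG0s, hGs⟩ :
      ∃ G : ℕ → Matrix (Fin (ℓ+2)) (Fin (ℓ+2)) F,
        (∀ m, G m 0 0 = 0) ∧ (∀ m (c' : Fin (ℓ+1)), G m 0 c'.succ = -(τ (ℓ - c'.val) ^ m)) ∧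
        (∀ m (r' : Fin (ℓ+1)) c, G m r'.succ c = 0) :=
    ⟨fun m => Matrix.of fun r c => Fin.cases
        (Fin.cases 0 (fun c' => -(τ (ℓ - c'.val) ^ m)) c) (fun _ => 0) r,
      fun m => by simp, fun m c' => by simp, fun m r' c => by simp⟩
  obtain ⟨H, hH00, hH0s, hHs⟩ :
      ∃ H : ℕ → Matrix (Fin (ℓ+2)) (Fin (ℓ+2)) F,
        (∀ m, H m 0 0 = 0) ∧
        (∀ m (c' : Fin (ℓ+1)), H m 0 c'.succ = if c'.val = ℓ - m then -1 else 0) ∧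
        (∀ m (r' : Fin (ℓ+1)) c, H m r'.succ c = 0) :=
    ⟨fun m => Matrix.of fun r c => Fin.cases
        (Fin.cases 0 (fun c' => if c'.val = ℓ - m then (-1:F) else 0) c) (fun _ => 0) r,
      fun m => by simp, fun m c' => by simp, fun m r' c => by simp⟩
  -- expansion of matrix multiplication over Fin (ℓ+2)
  have hmul : ∀ (M N : Matrix (Fin (ℓ+2)) (Fin (ℓ+2)) F) (r c : Fin (ℓ+2)),
      (M * N) r c = M r 0 * N 0 c + ∑ a : Fin (ℓ+1), M r a.succ * N a.succ c := by
    intro M N r c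
    rw [Matrix.mul_apply, Fin.sum_univ_succ]
  -- Kronecker decompositions
  have hUk : U = u ⊗ₖ (1 : Matrix (Fin n) (Fin n) F) := by
    ext ⟨r, s⟩ ⟨c, t⟩
    rw [hU, Matrix.kroneckerMap_apply]
    induction r using Fin.cases with
    | zero =>
      induction c using Fin.cases with
      | zero => simp [hu00, Matrix.one_apply]
      | succ c' => simp [hu0s]
    | succ r' =>
      induction c using Fin.cases with
      | zero => simp [hus0]
      | succ c' =>
        simp only [Fin.val_succ, Nat.add_sub_cancel, Fin.eta, Nat.succ_ne_zero, if_false,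
          huss, Matrix.one_apply, mul_ite, mul_one, mul_zero]
  have hWk : W = w ⊗ₖ (1 : Matrix (Fin n) (Fin n) F) := by
    ext ⟨r, s⟩ ⟨c, t⟩
    rw [hW, Matrix.kroneckerMap_apply]
    induction r using Fin.cases with
    | zero =>
      induction c using Fin.cases with
      | zero => simp [hw00, Matrix.one_apply]
      | succ c' =>
        simp only [Fin.val_succ, Nat.add_sub_cancel, Nat.succ_ne_zero, if_false, Fin.val_zero,
          if_true, hw0s, Matrix.one_apply, mul_ite, mul_one, mul_zero]
    | succ r' =>
      induction c using Fin.cases with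
      | zero => simp [hws0]
      | succ c' =>
        simp only [Fin.val_succ, Nat.add_sub_cancel, Fin.eta, Nat.succ_ne_zero, if_false,
          hwss, Matrix.one_apply, mul_ite, mul_one, mul_zero]
  have hk1 : ∀ M : Matrix (Fin (ℓ + 2) × Fin n) (Fin (ℓ + 2) × Fin n) F,
      (∀ r c : Fin (ℓ + 2), ∀ s t : Fin n, M (r, s) (c, t) =
        if r = c then (if r.val = 0 then 0 else if s = t then 1 else 0) else 0) →
      M = d1 ⊗ₖ (1 : Matrix (Fin n) (Fin n) F) := by
    intro M hM
    ext ⟨r, s⟩ ⟨c, t⟩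
    rw [hM, Matrix.kroneckerMap_apply]
    induction r using Fin.cases with
    | zero =>
      induction c using Fin.cases with
      | zero => simp [hd10]
      | succ c' => simp [hd10, (Fin.succ_ne_zero c').symm]
    | succ r' =>
      induction c using Fin.cases with
      | zero => simp [hd1s0, Fin.succ_ne_zero]
      | succ c' =>
        rw [hd1ss, Matrix.one_apply]
        by_cases hrc : r' = c' <;> simp [hrc, Fin.succ_inj]
  have hCL1k : CL1 = d1 ⊗ₖ (1 : Matrix (Fin n) (Fin n) F) := hk1 CL1 hCL1
  have hCM1k : CM1 = d1 ⊗ₖ (1 : Matrix (Fin n) (Fin n) F) := hk1 CM1 hCM1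
  have hCL0k : CL0 = dL ⊗ₖ (1 : Matrix (Fin n) (Fin n) F)
      + ∑ m ∈ Finset.range (ℓ+1), (G m) ⊗ₖ (A m) := by
    ext ⟨r, s⟩ ⟨c, t⟩
    rw [hCL0]
    simp only [Matrix.add_apply, Matrix.sum_apply, Matrix.kroneckerMap_apply]
    induction r using Fin.cases with
    | zero =>
      induction c using Fin.cases with
      | zero => simp [hdL0, hG00]
      | succ c' =>
        simp only [Fin.val_zero, if_true, Fin.val_succ, Nat.succ_ne_zero, if_false,
          Nat.add_sub_cancel, hdL0, hG0s, zero_mul, zero_add]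
        rw [hPval]
        simp [Matrix.neg_apply, Matrix.sum_apply, Matrix.smul_apply, smul_eq_mul,
          Finset.sum_neg_distrib, neg_mul]
    | succ r' =>
      induction c using Fin.cases with
      | zero =>
        simp only [Fin.val_succ, Nat.succ_ne_zero, if_false, Fin.val_zero, if_true,
          Nat.add_sub_cancel, hdLs0, hGs, zero_mul, Finset.sum_const_zero, add_zero,
          Matrix.one_apply, mul_ite, mul_one, mul_zero]
      | succ c' =>
        simp only [Fin.val_succ, Nat.succ_ne_zero, if_false, Nat.add_sub_cancel,
          hdLss, hGs, zero_mul, Finset.sum_const_zero, add_zero, Matrix.one_apply]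
        by_cases hrc : r' = c'
        · simp [hrc, Fin.succ_inj]
        · simp [hrc, fun h => hrc (Fin.succ_inj.mp h)]
  have hCM0k : CM0 = dM ⊗ₖ (1 : Matrix (Fin n) (Fin n) F)
      + ∑ m ∈ Finset.range (ℓ+1), (H m) ⊗ₖ (A m) := by
    ext ⟨r, s⟩ ⟨c, t⟩
    rw [hCM0]
    simp only [Matrix.add_apply, Matrix.sum_apply, Matrix.kroneckerMap_apply]
    induction r using Fin.cases with
    | zero =>
      induction c using Fin.cases with
      | zero => simp [hdM, hH00]
      | succ c' =>
        simp only [Fin.val_zero, if_true, Fin.val_succ, Nat.succ_ne_zero, if_false,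
          Nat.add_sub_cancel, hdM, hH0s]
        rw [zero_mul, zero_add, Finset.sum_eq_single (ℓ - (c' : ℕ))]
        · rw [if_pos (by have := c'.isLt; omega), neg_one_mul, Matrix.neg_apply]
        · intro b hb hbne
          have hb' := Finset.mem_range.mp hb
          rw [if_neg, zero_mul]
          intro h; exact hbne (by omega)
        · intro h; exact absurd (Finset.mem_range.mpr (by omega)) h
    | succ r' =>
      simp only [Fin.val_succ, Nat.succ_ne_zero, if_false, hdM, hHs, zero_mul,
        Finset.sum_const_zero, add_zero, Matrix.one_apply, mul_ite, mul_one, mul_zero]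
      split_ifs <;> rfl
  -- row identities
  have hrow0 : ∀ r' : Fin (ℓ+1), ∑ a : Fin (ℓ+1), V r' a * β (ℓ - a.val)
      = if (r' : ℕ) = 0 then 1 else 0 := by
    intro r'
    have h1 : ∀ a : Fin (ℓ+1), V r' a * β (ℓ - a.val)
        = β (ℓ - a.val) * τ (ℓ - a.val) ^ (ℓ - r'.val) := by
      intro a; rw [hV]; ring
    rw [Finset.sum_congr rfl fun a _ => h1 a,
      Fin.sum_univ_eq_sum_range (fun a => β (ℓ - a) * τ (ℓ - a) ^ (ℓ - r'.val)) (ℓ+1)]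
    have h2 := Finset.sum_range_reflect (fun k => β k * τ k ^ (ℓ - r'.val)) (ℓ+1)
    simp only [Nat.add_sub_cancel] at h2
    rw [h2, hS (ℓ - r'.val) (Nat.sub_le _ _)]
    have hlt := r'.isLt
    by_cases h : (r' : ℕ) = 0
    · rw [if_pos (by omega), if_pos h]
    · rw [if_neg (by omega), if_neg h]
  have hrow1 : ∀ b : Fin (ℓ+1), τ (ℓ - b.val) ^ (ℓ + 1)
      = -∑ j : Fin (ℓ+1), q (ℓ - j.val) * V j b := by
    intro b
    rw [hpow (ℓ - b.val) (Nat.sub_le _ _)]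
    congr 1
    have h1 : ∀ j : Fin (ℓ+1), q (ℓ - j.val) * V j b
        = q (ℓ - j.val) * τ (ℓ - b.val) ^ (ℓ - j.val) := by
      intro j; rw [hV]
    rw [Finset.sum_congr rfl fun j _ => h1 j,
      Fin.sum_univ_eq_sum_range (fun j => q (ℓ - j) * τ (ℓ - b.val) ^ (ℓ - j)) (ℓ+1)]
    have h2 := Finset.sum_range_reflect (fun m => q m * τ (ℓ - b.val) ^ m) (ℓ+1)
    simp only [Nat.add_sub_cancel] at h2
    rw [h2]
  -- scalar identities
  have I1 : u * d1 * w = d1 := by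
    have E0 : ∀ c, (u * d1) 0 c = 0 := by
      intro c
      rw [hmul, hd10, mul_zero, zero_add,
        Finset.sum_congr rfl fun a (_ : a ∈ Finset.univ) => by rw [hu0s, zero_mul],
        Finset.sum_const_zero]
    have Es0 : ∀ r' : Fin (ℓ+1), (u * d1) r'.succ 0 = 0 := by
      intro r'
      rw [hmul, hus0, zero_mul, zero_add,
        Finset.sum_congr rfl fun a (_ : a ∈ Finset.univ) => by rw [hd1s0, mul_zero],
        Finset.sum_const_zero]
    have Ess : ∀ r' c' : Fin (ℓ+1), (u * d1) r'.succ c'.succ = V r' c' := by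
      intro r' c'
      rw [hmul, hus0, zero_mul, zero_add,
        Finset.sum_congr rfl fun a (_ : a ∈ Finset.univ) => by rw [huss, hd1ss]]
      simp [mul_ite, mul_one, mul_zero]
    ext r c
    induction r using Fin.cases with
    | zero =>
      rw [hmul, E0, zero_mul, zero_add, hd10,
        Finset.sum_congr rfl fun a (_ : a ∈ Finset.univ) => by rw [E0, zero_mul],
        Finset.sum_const_zero]
    | succ r' =>
      induction c using Fin.cases with
      | zero =>
        rw [hmul, Es0, zero_mul, zero_add, hd1s0,
          Finset.sum_congr rfl fun a (_ : a ∈ Finset.univ) => by rw [hws0, mul_zero],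
          Finset.sum_const_zero]
      | succ c' =>
        rw [hmul, Es0, zero_mul, zero_add, hd1ss,
          Finset.sum_congr rfl fun a (_ : a ∈ Finset.univ) => by rw [Ess, hwss],
          ← Matrix.mul_apply, hVV, Matrix.one_apply]
  have I2 : u * dL * w = dM := by
    have Ls0 : ∀ r' : Fin (ℓ+1), (u * dL) r'.succ 0 = if (r' : ℕ) = 0 then 1 else 0 := by
      intro r'
      rw [hmul, hus0, zero_mul, zero_add,
        Finset.sum_congr rfl fun a (_ : a ∈ Finset.univ) => by rw [huss, hdLs0]]
      exact hrow0 r'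
    have Lss : ∀ r' c' : Fin (ℓ+1), (u * dL) r'.succ c'.succ = V r' c' * τ (ℓ - c'.val) := by
      intro r' c'
      rw [hmul, hus0, zero_mul, zero_add,
        Finset.sum_congr rfl fun a (_ : a ∈ Finset.univ) => by rw [huss, hdLss]]
      simp [mul_ite, mul_one, mul_zero]
    have L0 : ∀ c, (u * dL) 0 c = 0 := by
      intro c
      rw [hmul, hdL0, mul_zero, zero_add,
        Finset.sum_congr rfl fun a (_ : a ∈ Finset.univ) => by rw [hu0s, zero_mul],
        Finset.sum_const_zero]
    ext r c
    induction r using Fin.cases with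
    | zero =>
      rw [hmul, L0, zero_mul, zero_add, hdM,
        Finset.sum_congr rfl fun a (_ : a ∈ Finset.univ) => by rw [L0, zero_mul],
        Finset.sum_const_zero]
      rw [if_neg (by simp)]
    | succ r' =>
      induction c using Fin.cases with
      | zero =>
        rw [hmul, Ls0, hw00, mul_one,
          Finset.sum_congr rfl fun a (_ : a ∈ Finset.univ) => by rw [hws0, mul_zero],
          Finset.sum_const_zero, add_zero, hdM]
        by_cases h : (r' : ℕ) = 0
        · rw [if_pos h, if_pos (by simp [h])]
        · rw [if_neg h, if_neg (by simp only [Fin.val_succ, Fin.val_zero]; omega)]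
      | succ c' =>
        rw [hmul, Ls0, hw0s,
          Finset.sum_congr rfl fun a (_ : a ∈ Finset.univ) => by rw [Lss, hwss], hdM]
        by_cases h : (r' : ℕ) = 0
        · rw [if_pos h, one_mul]
          have e1 : ∀ a : Fin (ℓ+1), V r' a * τ (ℓ - a.val) * V⁻¹ a c'
              = ∑ j : Fin (ℓ+1), -(q (ℓ - j.val) * (V j a * V⁻¹ a c')) := by
            intro a
            rw [hV, h, Nat.sub_zero, ← pow_succ, hrow1 a, neg_mul, Finset.sum_mul,
              ← Finset.sum_neg_distrib]
            exact Finset.sum_congr rfl fun j _ => by ring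
          rw [Finset.sum_congr rfl fun a (_ : a ∈ Finset.univ) => e1 a, Finset.sum_comm]
          have e2 : ∀ j : Fin (ℓ+1), ∑ a : Fin (ℓ+1), -(q (ℓ - j.val) * (V j a * V⁻¹ a c'))
              = -(q (ℓ - j.val) * (1 : Matrix (Fin (ℓ+1)) (Fin (ℓ+1)) F) j c') := by
            intro j
            rw [Finset.sum_neg_distrib, ← Finset.mul_sum, ← Matrix.mul_apply, hVV]
          rw [Finset.sum_congr rfl fun j (_ : j ∈ Finset.univ) => e2 j]
          have e3 : ∑ j : Fin (ℓ+1), -(q (ℓ - j.val)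
              * (1 : Matrix (Fin (ℓ+1)) (Fin (ℓ+1)) F) j c') = -q (ℓ - c'.val) := by
            simp [Matrix.one_apply, mul_ite, mul_one, mul_zero]
          rw [e3, add_neg_cancel, if_neg (by simp only [Fin.val_succ]; omega)]
        · have e1 : ∀ a : Fin (ℓ+1), V r' a * τ (ℓ - a.val) * V⁻¹ a c'
              = V (⟨r'.val - 1, by have := r'.isLt; omega⟩ : Fin (ℓ+1)) a * V⁻¹ a c' := by
            intro a
            rw [hV, hV, ← pow_succ,
              show ℓ - (r' : ℕ) + 1 = ℓ - ((r' : ℕ) - 1) from by have := r'.isLt; omega]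
          rw [if_neg h, zero_mul, zero_add,
            Finset.sum_congr rfl fun a (_ : a ∈ Finset.univ) => e1 a,
            ← Matrix.mul_apply, hVV, Matrix.one_apply]
          by_cases hic : (⟨r'.val - 1, by have := r'.isLt; omega⟩ : Fin (ℓ+1)) = c'
          · have h2 : r'.val - 1 = (c' : ℕ) := congrArg Fin.val hic
            rw [if_pos hic, if_pos (by simp only [Fin.val_succ]; omega)]
          · have h2 : ¬(r'.val - 1 = (c' : ℕ)) := fun hh => hic (Fin.ext hh)
            rw [if_neg hic, if_neg (by simp only [Fin.val_succ]; omega)]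
  have I3 : ∀ m ≤ ℓ, u * G m * w = H m := by
    intro m hm
    have K0 : ∀ c, (u * G m) 0 c = G m 0 c := by
      intro c
      rw [hmul, hu00, one_mul,
        Finset.sum_congr rfl fun a (_ : a ∈ Finset.univ) => by rw [hu0s, zero_mul],
        Finset.sum_const_zero, add_zero]
    have Ks : ∀ (r' : Fin (ℓ+1)) c, (u * G m) r'.succ c = 0 := by
      intro r' c
      rw [hmul, hus0, zero_mul, zero_add,
        Finset.sum_congr rfl fun a (_ : a ∈ Finset.univ) => by rw [hGs, mul_zero],
        Finset.sum_const_zero]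
    ext r c
    induction r using Fin.cases with
    | succ r' =>
      rw [hmul, Ks, zero_mul, zero_add, hHs,
        Finset.sum_congr rfl fun a (_ : a ∈ Finset.univ) => by rw [Ks, zero_mul],
        Finset.sum_const_zero]
    | zero =>
      induction c using Fin.cases with
      | zero =>
        rw [hmul, K0, hG00, zero_mul, zero_add, hH00,
          Finset.sum_congr rfl fun a (_ : a ∈ Finset.univ) => by rw [hws0, mul_zero],
          Finset.sum_const_zero]
      | succ c' =>
        rw [hmul, K0, hG00, zero_mul, zero_add, hH0s,
          Finset.sum_congr rfl fun a (_ : a ∈ Finset.univ) => by rw [K0, hG0s, hwss]]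
        have e1 : ∀ a : Fin (ℓ+1), -(τ (ℓ - a.val) ^ m) * V⁻¹ a c'
            = -(V (⟨ℓ - m, by omega⟩ : Fin (ℓ+1)) a * V⁻¹ a c') := by
          intro a
          rw [hV, neg_mul, Nat.sub_sub_self hm]
        rw [Finset.sum_congr rfl fun a (_ : a ∈ Finset.univ) => e1 a,
          Finset.sum_neg_distrib, ← Matrix.mul_apply, hVV, Matrix.one_apply]
        by_cases hc : (c' : ℕ) = ℓ - m
        · rw [if_pos (Fin.ext (by simpa using hc.symm)), if_pos hc]
        · rw [if_neg (fun hh => hc ((congrArg Fin.val hh).symm)), if_neg hc, neg_zero]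
  -- determinant of u
  have hudet : u.det = V.det := by
    rw [Matrix.det_succ_row_zero, Fin.sum_univ_succ,
      Finset.sum_congr rfl fun (j' : Fin (ℓ+1)) (_ : j' ∈ Finset.univ) => by
        rw [hu0s, mul_zero, zero_mul],
      Finset.sum_const_zero, add_zero, hu00]
    simp only [Fin.val_zero, pow_zero, one_mul, mul_one, Fin.succAbove_zero]
    congr 1
    ext i j
    rw [Matrix.submatrix_apply, huss]
  refine ⟨?_, ?_, ?_, pow_ne_zero _ hP0⟩
  · rw [hUk, hCL1k, hWk, hCM1k, ← Matrix.mul_kronecker_mul, ← Matrix.mul_kronecker_mul, I1,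
      one_mul, one_mul]
  · rw [hUk, hCL0k, hWk, hCM0k, mul_add, add_mul, ← Matrix.mul_kronecker_mul,
      ← Matrix.mul_kronecker_mul, I2, one_mul, one_mul, Finset.mul_sum, Finset.sum_mul]
    congr 1
    refine Finset.sum_congr rfl fun m hm => ?_
    rw [← Matrix.mul_kronecker_mul, ← Matrix.mul_kronecker_mul,
      I3 m (Nat.lt_succ_iff.mp (Finset.mem_range.mp hm)), one_mul, mul_one]
  · left
    rw [hUk, Matrix.det_kronecker, Matrix.det_one, one_pow, mul_one, hudet, hVdet,
      Fintype.card_fin]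
end
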